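/- arXiv:1904.02143 — 4 statements merged into one kernel-verified Lean document; each statement's English description precedes it below -/
import Mathlib

section
/- Let a ≤ −1. For any u ∈ C^∞(Ω̄) with finite weighted H^{1,a} norm (weight |y|^a) on a bounded open Ω ⊂ ℝ^{n+1}, the truncations u_ε = ε·η(u/ε), where η ∈ C^∞(ℝ) is nondecreasing with η(t)=0 for |t|≤1 and η(t)=t for |t|≥2, satisfy u_ε → u strongly in H^{1,a}(Ω), i.e. ∫_Ω |y|^a |∇u_ε − ∇u|² → 0 and ∫_Ω |y|^a (u_ε − u)² → 0 as ε → 0. -/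
open MeasureTheory Metric Real Filter
open scoped Topology

abbrev Euc (n : ℕ) : Type := EuclideanSpace ℝ (Fin (n + 1))

/-- A subset of `ℝ` all of whose points are isolated from it is countable. -/
lemma countable_of_forall_isolated {s : Set ℝ}
    (h : ∀ x ∈ s, ∀ᶠ y in 𝓝[≠] x, y ∉ s) : s.Countable := by
  have hmem : ∀ x ∈ s, {x} ∈ 𝓝[s] x := by
    intro x hx
    have hev := h x hx
    rw [eventually_nhdsWithin_iff] at hev
    obtain ⟨U, hU, hUo, hxU⟩ := _root_.eventually_nhds_iff.mp hev
    rw [mem_nhdsWithin]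
    refine ⟨U, hUo, hxU, fun y ⟨hyU, hys⟩ => ?_⟩
    by_contra hne
    exact hU y hyU (by simpa using hne) hys
  obtain ⟨t, hts, htc, hcov⟩ := TopologicalSpace.countable_cover_nhdsWithin
    (f := fun x => ({x} : Set ℝ)) (s := s) hmem
  refine htc.mono fun x hx => ?_
  simpa using hcov hx

/-- Chain rule for the gradient with a scalar outer function. -/
lemma hasGradientAt_comp_real {F : Type*} [NormedAddCommGroup F] [InnerProductSpace ℝ F]
    [CompleteSpace F] {u : F → ℝ} {G : F} {z : F} {φ : ℝ → ℝ} {c : ℝ}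
    (hu : HasGradientAt u G z) (hφ : HasDerivAt φ c (u z)) :
    HasGradientAt (fun w => φ (u w)) (c • G) z := by
  rw [hasGradientAt_iff_hasFDerivAt] at hu ⊢
  have h := (hφ.hasFDerivAt).comp z hu
  refine h.congr_fderiv ?_
  ext x
  simp [InnerProductSpace.toDual_apply_apply, real_inner_smul_left,
    ContinuousLinearMap.smulRight_apply, mul_comm]

/-- The set where a differentiable function vanishes but its derivative does not is null. -/
lemma null_level_set (n : ℕ) {Ω : Set (Euc n)} (hΩo : IsOpen Ω) {u : Euc n → ℝ}
    (hd : ∀ z ∈ Ω, DifferentiableAt ℝ u z)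
    (hc : ContinuousOn (fderiv ℝ u) Ω) (hcu : ContinuousOn u Ω) :
    volume {z | z ∈ Ω ∧ u z = 0 ∧ fderiv ℝ u z ≠ 0} = 0 := by
  classical
  set L := (EuclideanSpace.equiv (Fin (n+1)) ℝ).symm with hLdef
  set v : Fin (n+1) → Euc n := fun i => L (Pi.single i 1) with hvdef
  set S : Fin (n+1) → Set (Euc n) :=
    fun i => {z | z ∈ Ω ∧ u z = 0 ∧ fderiv ℝ u z (v i) ≠ 0} with hSdef
  have key : ∀ i : Fin (n+1), volume (S i) = 0 := by
    intro i
    -- measurability of S i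
    have hU1 : IsOpen (Ω ∩ u ⁻¹' ({0}ᶜ)) :=
      hcu.isOpen_inter_preimage hΩo isClosed_singleton.isOpen_compl
    have hcfi : ContinuousOn (fun z => fderiv ℝ u z (v i)) Ω :=
      (ContinuousLinearMap.apply ℝ ℝ (v i)).continuous.comp_continuousOn hc
    have hU2 : IsOpen (Ω ∩ (fun z => fderiv ℝ u z (v i)) ⁻¹' ({0}ᶜ)) :=
      hcfi.isOpen_inter_preimage hΩo isClosed_singleton.isOpen_compl
    have hSm : MeasurableSet (S i) := by
      have : S i = (Ω \ (Ω ∩ u ⁻¹' ({0}ᶜ))) ∩ (Ω ∩ (fun z => fderiv ℝ u z (v i)) ⁻¹' ({0}ᶜ)) := by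
        ext z
        simp only [hSdef, Set.mem_setOf_eq, Set.mem_inter_iff, Set.mem_diff,
          Set.mem_preimage, Set.mem_compl_iff, Set.mem_singleton_iff]
        tauto
      rw [this]
      exact ((hΩo.measurableSet.diff hU1.measurableSet).inter hU2.measurableSet)
    -- transfer to the product space
    set ψ := MeasurableEquiv.piFinSuccAbove (fun _ : Fin (n+1) => ℝ) i with hψdef
    set e := (MeasurableEquiv.toLp 2 (Fin (n+1) → ℝ)).symm with hedef
    have hΦ : MeasurePreserving (fun p : ℝ × (Fin n → ℝ) => e.symm (ψ.symm p))
        volume volume :=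
      ((EuclideanSpace.volume_preserving_symm_measurableEquiv_toLp (Fin (n+1))).symm e).comp
        ((volume_preserving_piFinSuccAbove (fun _ : Fin (n+1) => ℝ) i).symm ψ)
    have hpre := hΦ.measure_preimage hSm.nullMeasurableSet
    rw [← hpre]
    -- the preimage
    have hΦapp : ∀ p : ℝ × (Fin n → ℝ), e.symm (ψ.symm p) = L (i.insertNth p.1 p.2) := by
      intro p
      have : ψ.symm p = i.insertNth p.1 p.2 := by
        rw [MeasurableEquiv.piFinSuccAbove_symm_apply]
        exact funext fun j => Fin.insertNthEquiv_apply _ _ _ _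
      rw [this]
      rfl
    have hAm : MeasurableSet ((fun p : ℝ × (Fin n → ℝ) => e.symm (ψ.symm p)) ⁻¹' S i) :=
      hΦ.measurable hSm
    rw [Measure.volume_eq_prod, Measure.prod_apply_symm hAm]
    -- each slice is countable
    have hslice : ∀ w : Fin n → ℝ,
        volume ((fun t => (t, w)) ⁻¹' ((fun p : ℝ × (Fin n → ℝ) => e.symm (ψ.symm p)) ⁻¹' S i))
          = 0 := by
      intro w
      refine Set.Countable.measure_zero ?_ _
      apply countable_of_forall_isolated
      intro t₀ ht₀
      simp only [Set.mem_preimage, hΦapp, hSdef, Set.mem_setOf_eq] at ht₀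
      obtain ⟨hzΩ, hz0, hzf⟩ := ht₀
      -- the line t ↦ L (insertNth t w)
      have hins : ∀ t : ℝ, (i.insertNth t w : Fin (n+1) → ℝ)
          = i.insertNth (0:ℝ) w + t • (Pi.single i 1 : Fin (n+1) → ℝ) := by
        intro t
        funext j
        refine Fin.succAboveCases i ?_ ?_ j
        · simp
        · intro k
          simp [Pi.single_eq_of_ne (Fin.succAbove_ne i k)]
      have hline : HasDerivAt (fun t : ℝ => L (i.insertNth t w)) (v i) t₀ := by
        have h1 : HasDerivAt (fun t : ℝ => L (i.insertNth (0:ℝ) w) + t • v i) (v i) t₀ := by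
          simpa using ((hasDerivAt_id t₀).smul_const (v i)).const_add (L (i.insertNth (0:ℝ) w))
        refine h1.congr_of_eventuallyEq (Filter.Eventually.of_forall fun t => ?_)
        show L (i.insertNth t w) = L (i.insertNth (0:ℝ) w) + t • v i
        rw [hins t, map_add, _root_.map_smul]
      have hud : HasDerivAt (fun t : ℝ => u (L (i.insertNth t w)))
          (fderiv ℝ u (L (i.insertNth t₀ w)) (v i)) t₀ :=
        ((hd _ hzΩ).hasFDerivAt).comp_hasDerivAt t₀ hline
      have hev := hud.eventually_ne (c := u (L (i.insertNth t₀ w))) hzf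
      filter_upwards [hev] with t ht hmem
      simp only [Set.mem_preimage, hΦapp, hSdef, Set.mem_setOf_eq] at hmem
      exact ht (by rw [hmem.2.1, hz0])
    simp only [hslice]
    simp
  -- covering
  have hcover : {z | z ∈ Ω ∧ u z = 0 ∧ fderiv ℝ u z ≠ 0} ⊆ ⋃ i, S i := by
    rintro z ⟨hzΩ, hz0, hzf⟩
    by_contra hnot
    simp only [Set.mem_iUnion, not_exists, hSdef, Set.mem_setOf_eq, not_and, not_not] at hnot
    have hall : ∀ i, fderiv ℝ u z (v i) = 0 := fun i => hnot i hzΩ hz0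
    apply hzf
    have hzero : ((fderiv ℝ u z).comp (L : (Fin (n+1) → ℝ) →L[ℝ] Euc n)).toLinearMap = 0 := by
      apply LinearMap.pi_ext
      intro i x
      have hsx : (Pi.single i x : Fin (n+1) → ℝ) = x • (Pi.single i 1 : Fin (n+1) → ℝ) := by
        rw [← Pi.single_smul, smul_eq_mul, mul_one]
      have hval : (fderiv ℝ u z) (L (Pi.single i x)) = x * (fderiv ℝ u z) (L (Pi.single i 1)) := by
        rw [hsx, _root_.map_smul, _root_.map_smul, smul_eq_mul]
      simp [hval, show (fderiv ℝ u z) (L (Pi.single i 1)) = 0 from hall i]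
    ext x
    have hx := LinearMap.congr_fun hzero (L.symm x)
    simpa using hx
  exact measure_mono_null hcover (measure_iUnion_null key)

/-- for `a ≤ -1`, bounded open `Ω`, and `u ∈ C^∞(Ω̄)` with finite weighted
`H^{1,a}` norm, the truncations `u_ε = ε·η(u/ε)` converge strongly to `u` in `H^{1,a}(Ω)`
as `ε → 0⁺`, i.e. `∫_Ω |y|^a |∇u_ε - ∇u|² → 0` and `∫_Ω |y|^a (u_ε - u)² → 0`. -/
theorem stmt3 (n : ℕ) (a : ℝ) (ha : a ≤ -1)
    (Ω : Set (Euc n)) (hΩo : IsOpen Ω) (hΩb : Bornology.IsBounded Ω)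
    (u : Euc n → ℝ) (hu : ContDiffOn ℝ (⊤ : ℕ∞) u (closure Ω))
    (hInt : IntegrableOn
      (fun z => |z (Fin.last n)| ^ a * ((u z) ^ 2 + ‖gradient u z‖ ^ 2)) Ω volume)
    (η : ℝ → ℝ) (hη : ContDiff ℝ (⊤ : ℕ∞) η) (hηmono : Monotone η)
    (hη0 : ∀ t : ℝ, |t| ≤ 1 → η t = 0) (hη1 : ∀ t : ℝ, 2 ≤ |t| → η t = t) :
    Tendsto (fun ε : ℝ => ∫ z in Ω, |z (Fin.last n)| ^ a *
        ‖gradient (fun w => ε * η (u w / ε)) z - gradient u z‖ ^ 2) (𝓝[>] 0) (𝓝 0) ∧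
    Tendsto (fun ε : ℝ => ∫ z in Ω, |z (Fin.last n)| ^ a *
        (ε * η (u z / ε) - u z) ^ 2) (𝓝[>] 0) (𝓝 0) := by
  have hΩm : MeasurableSet Ω := hΩo.measurableSet
  set μ := volume.restrict Ω with hμdef
  set g : Euc n → ℝ := fun z => |z (Fin.last n)| ^ a with hgdef
  have hg0 : ∀ z, 0 ≤ g z := fun z => Real.rpow_nonneg (abs_nonneg _) a
  have hgm : Measurable g := by
    have h1 : Measurable fun z : Euc n => z (Fin.last n) :=
      (measurable_pi_apply (Fin.last n)).comp
        (MeasurableEquiv.toLp 2 (Fin (n+1) → ℝ)).symm.measurable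
    exact (h1.abs).pow_const a
  set D : Euc n → ℝ := fun z => g z * ((u z) ^ 2 + ‖gradient u z‖ ^ 2) with hDdef
  -- basic differentiability and continuity facts
  have hdiff : ∀ z ∈ Ω, DifferentiableAt ℝ u z := by
    intro z hz
    exact (hu.differentiableOn (by simp)).differentiableAt
      (mem_of_superset (hΩo.mem_nhds hz) subset_closure)
  have huc : ContinuousOn u Ω := hu.continuousOn.mono subset_closure
  have hfc : ContinuousOn (fderiv ℝ u) Ω :=
    (hu.mono subset_closure).continuousOn_fderiv_of_isOpen hΩo (by simp)
  have hgradc : ContinuousOn (fun z => gradient u z) Ω := by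
    show ContinuousOn
      (fun z => (InnerProductSpace.toDual ℝ (Euc n)).symm (fderiv ℝ u z)) Ω
    exact (InnerProductSpace.toDual ℝ (Euc n)).symm.continuous.comp_continuousOn hfc
  -- bounds on η and deriv η
  have hηbound : ∀ t : ℝ, |η t| ≤ 2 * |t| := by
    intro t
    rcases le_or_gt |t| 1 with h | h
    · rw [hη0 t h]
      simpa using mul_nonneg (by norm_num : (0:ℝ) ≤ 2) (abs_nonneg t)
    rcases le_or_gt 2 |t| with h2 | h2
    · rw [hη1 t h2]
      nlinarith [abs_nonneg t]
    · have hm2 : η (-2) = -2 := hη1 (-2) (by norm_num)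
      have hp2 : η 2 = 2 := hη1 2 (by norm_num)
      have ht1 := abs_le.mp h2.le
      have hle : η t ≤ 2 := hp2 ▸ hηmono ht1.2
      have hge : (-2:ℝ) ≤ η t := hm2 ▸ hηmono ht1.1
      have : |η t| ≤ 2 := abs_le.mpr ⟨hge, hle⟩
      linarith
  have hηdiff : Differentiable ℝ η := hη.differentiable (by simp)
  have hder : Continuous (deriv η) := hη.continuous_deriv (by simp)
  have hderiv_one : ∀ t : ℝ, 2 < |t| → deriv η t = 1 := by
    intro t ht
    have hop : IsOpen {x : ℝ | 2 < |x|} := isOpen_Ioi.preimage continuous_abs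
    have hev : η =ᶠ[𝓝 t] id :=
      Filter.eventuallyEq_of_mem (hop.mem_nhds ht) fun x hx => hη1 x (le_of_lt hx)
    rw [hev.deriv_eq]
    exact deriv_id t
  obtain ⟨C, hC⟩ := (isCompact_Icc (a := (-3:ℝ)) (b := 3)).exists_bound_of_continuousOn
    hder.continuousOn
  set M := max C 1 with hMdef
  have hM1 : (1:ℝ) ≤ M := le_max_right _ _
  have hMbound : ∀ t : ℝ, |deriv η t| ≤ M := by
    intro t
    rcases le_or_gt |t| 3 with h | h
    · have := hC t (abs_le.mp h)
      rw [Real.norm_eq_abs] at this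
      exact this.trans (le_max_left _ _)
    · rw [hderiv_one t (by linarith)]
      simpa using hM1
  -- chain-rule formula for the gradient
  have hφd : ∀ (ε : ℝ), ε ≠ 0 → ∀ t : ℝ,
      HasDerivAt (fun s : ℝ => ε * η (s / ε)) (deriv η (t / ε)) t := by
    intro ε hε t
    have h1 : HasDerivAt (fun s : ℝ => s / ε) (1 / ε) t := by
      simpa using (hasDerivAt_id t).div_const ε
    have h2 : HasDerivAt η (deriv η (t / ε)) (t / ε) := (hηdiff (t / ε)).hasDerivAt
    have h3 := HasDerivAt.const_mul ε (h2.comp t h1)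
    have : ε * (deriv η (t / ε) * (1 / ε)) = deriv η (t / ε) := by
      field_simp
    rwa [this] at h3
  have hgradeq : ∀ (ε : ℝ), ε ≠ 0 → ∀ z ∈ Ω,
      gradient (fun w => ε * η (u w / ε)) z = deriv η (u z / ε) • gradient u z := by
    intro ε hε z hz
    exact (hasGradientAt_comp_real ((hdiff z hz).hasGradientAt) (hφd ε hε (u z))).gradient
  -- measurability of the relevant a.e.-measurable functions
  have hum : AEStronglyMeasurable u μ := huc.aestronglyMeasurable hΩm
  have hgradm : AEStronglyMeasurable (fun z => gradient u z) μ :=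
    hgradc.aestronglyMeasurable hΩm
  have hgmae : AEStronglyMeasurable g μ := hgm.aestronglyMeasurable
  have hDInt : Integrable D μ := hInt
  constructor
  · -- the gradient part
    set G₁ : ℝ → Euc n → ℝ :=
      fun ε z => g z * ((deriv η (u z / ε) - 1) ^ 2 * ‖gradient u z‖ ^ 2) with hG₁def
    have hEq : (fun ε : ℝ =>
        ∫ z in Ω, g z * ‖gradient (fun w => ε * η (u w / ε)) z - gradient u z‖ ^ 2)
          =ᶠ[𝓝[>] (0:ℝ)] (fun ε : ℝ => ∫ z in Ω, G₁ ε z) := by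
      filter_upwards [self_mem_nhdsWithin] with ε hε
      refine setIntegral_congr_fun hΩm fun z hz => ?_
      rw [hgradeq ε (ne_of_gt hε) z hz]
      have hsm : deriv η (u z / ε) • gradient u z - gradient u z
          = (deriv η (u z / ε) - 1) • gradient u z := by
        rw [sub_smul, one_smul]
      rw [hsm, norm_smul, Real.norm_eq_abs, mul_pow, sq_abs]
    have hbadnull : volume {z | z ∈ Ω ∧ u z = 0 ∧ fderiv ℝ u z ≠ 0} = 0 :=
      null_level_set n hΩo hdiff hfc huc
    have hbadμ : μ {z | z ∈ Ω ∧ u z = 0 ∧ fderiv ℝ u z ≠ 0} = 0 :=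
      le_antisymm (le_trans (Measure.restrict_le_self _) hbadnull.le) zero_le
    have hae2 : ∀ᵐ z ∂μ, z ∉ {z | z ∈ Ω ∧ u z = 0 ∧ fderiv ℝ u z ≠ 0} :=
      measure_eq_zero_iff_ae_notMem.mp hbadμ
    have hDCT : Tendsto (fun ε : ℝ => ∫ z in Ω, G₁ ε z) (𝓝[>] (0:ℝ)) (𝓝 0) := by
      have h := tendsto_integral_filter_of_dominated_convergence
        (μ := μ) (F := G₁) (f := fun _ => (0:ℝ)) (l := 𝓝[>] (0:ℝ))
        (fun z => (M + 1) ^ 2 * D z) ?_ ?_ ?_ ?_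
      · simpa using h
      · refine Filter.Eventually.of_forall fun ε => ?_
        refine hgmae.mul (AEStronglyMeasurable.mul ?_ ?_)
        · have hcont : Continuous fun s : ℝ => (deriv η (s / ε) - 1) ^ 2 := by
            exact ((hder.comp (continuous_id.div_const ε)).sub continuous_const).pow 2
          exact hcont.comp_aestronglyMeasurable hum
        · exact (continuous_norm.pow 2).comp_aestronglyMeasurable hgradm
      · refine Filter.Eventually.of_forall fun ε => ?_
        refine Filter.Eventually.of_forall fun z => ?_
        have hd1 : |deriv η (u z / ε) - 1| ≤ M + 1 := by
          have := hMbound (u z / ε)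
          have h2 := abs_sub (deriv η (u z / ε)) 1
          simp only [abs_one] at h2
          linarith
        have hd2 : (deriv η (u z / ε) - 1) ^ 2 ≤ (M + 1) ^ 2 := by
          rw [← sq_abs]
          exact pow_le_pow_left₀ (abs_nonneg _) hd1 2
        have hnn : 0 ≤ G₁ ε z := by
          apply mul_nonneg (hg0 z)
          positivity
        rw [Real.norm_eq_abs, abs_of_nonneg hnn]
        have step1 : G₁ ε z ≤ g z * ((M + 1) ^ 2 * ‖gradient u z‖ ^ 2) := by
          apply mul_le_mul_of_nonneg_left _ (hg0 z)
          exact mul_le_mul_of_nonneg_right hd2 (sq_nonneg _)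
        refine step1.trans ?_
        have : g z * ((M + 1) ^ 2 * ‖gradient u z‖ ^ 2)
            ≤ (M + 1) ^ 2 * (g z * ((u z) ^ 2 + ‖gradient u z‖ ^ 2)) := by
          nlinarith [hg0 z, sq_nonneg (u z), sq_nonneg ‖gradient u z‖,
            mul_nonneg (hg0 z) (sq_nonneg (u z)), sq_nonneg (M + 1)]
        exact this
      · exact hDInt.const_mul _
      · filter_upwards [ae_restrict_mem hΩm, hae2] with z hzΩ hzb
        rcases eq_or_ne (u z) 0 with h0 | h0
        · have hgz : gradient u z = 0 := by
            by_contra hne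
            have hf : fderiv ℝ u z ≠ 0 := by
              intro hf
              apply hne
              show (InnerProductSpace.toDual ℝ (Euc n)).symm (fderiv ℝ u z) = 0
              rw [hf, map_zero]
            exact hzb ⟨hzΩ, h0, hf⟩
          have : (fun ε : ℝ => G₁ ε z) = fun _ => 0 := by
            funext ε; simp [hG₁def, hgz]
          rw [this]
          exact tendsto_const_nhds
        · have hev : (fun ε : ℝ => G₁ ε z) =ᶠ[𝓝[>] (0:ℝ)] fun _ => 0 := by
            filter_upwards [Ioo_mem_nhdsGT_of_mem
              (Set.left_mem_Ico.mpr (by positivity : (0:ℝ) < |u z| / 3))] with ε hε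
            have h3 : 2 < |u z / ε| := by
              rw [abs_div, abs_of_pos hε.1, lt_div_iff₀ hε.1]
              have := hε.2
              have habs : 0 < |u z| := abs_pos.mpr h0
              nlinarith
            simp [hG₁def, hderiv_one _ h3]
          exact (tendsto_const_nhds.congr' hev.symm)
    exact hDCT.congr' hEq.symm
  · -- the truncation part
    set F₂ : ℝ → Euc n → ℝ := fun ε z => g z * (ε * η (u z / ε) - u z) ^ 2 with hF₂def
    have h := tendsto_integral_filter_of_dominated_convergence
      (μ := μ) (F := F₂) (f := fun _ => (0:ℝ)) (l := 𝓝[>] (0:ℝ))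
      (fun z => 9 * D z) ?_ ?_ ?_ ?_
    · simpa using h
    · refine Filter.Eventually.of_forall fun ε => ?_
      refine hgmae.mul ?_
      have hcont : Continuous fun s : ℝ => (ε * η (s / ε) - s) ^ 2 := by
        exact ((continuous_const.mul (hη.continuous.comp (continuous_id.div_const ε))).sub
          continuous_id).pow 2
      exact hcont.comp_aestronglyMeasurable hum
    · filter_upwards [self_mem_nhdsWithin] with ε (hε : (0:ℝ) < ε)
      refine Filter.Eventually.of_forall fun z => ?_
      have h1 : |ε * η (u z / ε)| ≤ 2 * |u z| := by
        rw [abs_mul]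
        calc |ε| * |η (u z / ε)| ≤ |ε| * (2 * |u z / ε|) :=
              mul_le_mul_of_nonneg_left (hηbound _) (abs_nonneg ε)
          _ = 2 * |u z| := by
              rw [abs_div]
              field_simp
      have h2 : |ε * η (u z / ε) - u z| ≤ 3 * |u z| := by
        have := abs_sub (ε * η (u z / ε)) (u z)
        linarith
      have h3 : (ε * η (u z / ε) - u z) ^ 2 ≤ 9 * (u z) ^ 2 := by
        calc (ε * η (u z / ε) - u z) ^ 2 = |ε * η (u z / ε) - u z| ^ 2 := (sq_abs _).symm
          _ ≤ (3 * |u z|) ^ 2 := pow_le_pow_left₀ (abs_nonneg _) h2 2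
          _ = 9 * (u z) ^ 2 := by rw [mul_pow, sq_abs]; norm_num
      have hnn : 0 ≤ F₂ ε z := mul_nonneg (hg0 z) (sq_nonneg _)
      rw [Real.norm_eq_abs, abs_of_nonneg hnn]
      calc F₂ ε z ≤ g z * (9 * (u z) ^ 2) := mul_le_mul_of_nonneg_left h3 (hg0 z)
        _ ≤ 9 * D z := by
            simp only [hDdef]
            nlinarith [hg0 z, sq_nonneg ‖gradient u z‖,
              mul_nonneg (hg0 z) (sq_nonneg ‖gradient u z‖)]
    · exact hDInt.const_mul _
    · refine Filter.Eventually.of_forall fun z => ?_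
      rcases eq_or_ne (u z) 0 with h0 | h0
      · have : (fun ε : ℝ => F₂ ε z) = fun _ => 0 := by
          funext ε
          simp [hF₂def, h0, hη0 0 (by norm_num)]
        rw [this]
        exact tendsto_const_nhds
      · have hev : (fun ε : ℝ => F₂ ε z) =ᶠ[𝓝[>] (0:ℝ)] fun _ => 0 := by
          filter_upwards [Ioo_mem_nhdsGT_of_mem
            (Set.left_mem_Ico.mpr (by positivity : (0:ℝ) < |u z| / 2))] with ε hε
          have h3 : 2 ≤ |u z / ε| := by
            rw [abs_div, abs_of_pos hε.1, le_div_iff₀ hε.1]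
            have := hε.2
            nlinarith
          simp [hF₂def, hη1 _ h3, mul_div_cancel₀ _ (ne_of_gt hε.1)]
        exact (tendsto_const_nhds.congr' hev.symm)
end

section
/- Let a ≥ 1 and Ω ⊂ ℝ^{n+1} bounded open. Define for 0 < δ < 1 the cutoff f_δ(y) = 0 for |y| ≤ δ², f_δ(y) = log(|y|/δ²)/log(1/δ) for δ² ≤ |y| ≤ δ, and f_δ(y) = 1 for |y| ≥ δ. Then for every u ∈ C^∞(Ω̄) with finite H^{1,a}(Ω) norm, the products f_δ·u converge strongly to u in H^{1,a}(Ω) as δ → 0. -/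
open MeasureTheory Metric Real Filter
open scoped Topology

private lemma sq_add_le_two_sq (G B : ℝ) : (G + B)^2 ≤ 2*G^2 + 2*B^2 := by
  nlinarith [sq_nonneg (G - B)]

private lemma coord_le_norm {n : ℕ} (z : Euc n) (i : Fin (n+1)) : |z i| ≤ ‖z‖ := by
  rw [EuclideanSpace.norm_eq]
  have h1 : |z i|^2 ≤ ∑ j, ‖z j‖^2 := by
    have := Finset.single_le_sum (f := fun j => ‖z j‖^2) (fun j _ => by positivity)
      (Finset.mem_univ i)
    simpa [Real.norm_eq_abs] using this
  calc |z i| = Real.sqrt (|z i|^2) := (Real.sqrt_sq (abs_nonneg _)).symm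
  _ ≤ _ := Real.sqrt_le_sqrt h1

private lemma hyperplane_null {n : ℕ} (c : ℝ) :
    (volume : Measure (Euc n)) {z | z (Fin.last n) = c} = 0 := by
  have h1 : MeasurableSet {x : Fin (n+1) → ℝ | x (Fin.last n) = c} :=
    measurableSet_eq_fun (measurable_pi_apply _) measurable_const
  have h2 := (EuclideanSpace.volume_preserving_symm_measurableEquiv_toLp (Fin (n+1))).measure_preimage
    h1.nullMeasurableSet
  calc (volume : Measure (Euc n)) {z | z (Fin.last n) = c}
      = volume {x : Fin (n+1) → ℝ | x (Fin.last n) = c} := h2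
    _ = 0 := by
        rw [volume_pi]
        exact Measure.pi_hyperplane (fun _ : Fin (n+1) => (volume : Measure ℝ)) (Fin.last n) c

private lemma ae_ne_last {n : ℕ} (Ω : Set (Euc n)) (c : ℝ) :
    ∀ᵐ z ∂(volume.restrict Ω), z (Fin.last n) ≠ c := by
  refine ae_restrict_of_ae ?_
  rw [ae_iff]
  convert hyperplane_null (n := n) c using 2
  simp

set_option maxHeartbeats 3000000 in
/-- for `a ≥ 1`, bounded open `Ω`, and the logarithmic cutoffs `f_δ`, the
products `f_δ·u` converge strongly to `u` in `H^{1,a}(Ω)` as `δ → 0`, for every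
`u ∈ C^∞(Ω̄)` with finite `H^{1,a}(Ω)` norm. -/
theorem stmt4 (n : ℕ) (a : ℝ) (ha : 1 ≤ a)
    (Ω : Set (Euc n)) (hΩo : IsOpen Ω) (hΩb : Bornology.IsBounded Ω)
    (F : ℝ → ℝ → ℝ)
    (hF0 : ∀ δ ∈ Set.Ioo (0 : ℝ) 1, ∀ y : ℝ, |y| ≤ δ ^ 2 → F δ y = 0)
    (hF1 : ∀ δ ∈ Set.Ioo (0 : ℝ) 1, ∀ y : ℝ, δ ^ 2 ≤ |y| → |y| ≤ δ →
        F δ y = Real.log (|y| / δ ^ 2) / Real.log (1 / δ))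
    (hF2 : ∀ δ ∈ Set.Ioo (0 : ℝ) 1, ∀ y : ℝ, δ ≤ |y| → F δ y = 1)
    (u : Euc n → ℝ) (hu : ContDiffOn ℝ (⊤ : ℕ∞) u (closure Ω))
    (hInt : IntegrableOn
      (fun z => |z (Fin.last n)| ^ a * ((u z) ^ 2 + ‖gradient u z‖ ^ 2)) Ω volume) :
    Tendsto (fun δ : ℝ => ∫ z in Ω, |z (Fin.last n)| ^ a *
        ((F δ (z (Fin.last n)) * u z - u z) ^ 2 +
          ‖gradient (fun w => F δ (w (Fin.last n)) * u w) z - gradient u z‖ ^ 2))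
      (𝓝[Set.Ioo (0 : ℝ) 1] 0) (𝓝 0) := by
  -- Notation
  set w : Euc n → ℝ := fun z => |z (Fin.last n)| ^ a * ((u z) ^ 2 + ‖gradient u z‖ ^ 2) with hwdef
  have hw0 : ∀ z, 0 ≤ w z := fun z =>
    mul_nonneg (Real.rpow_nonneg (abs_nonneg _) _) (add_nonneg (sq_nonneg _) (sq_nonneg _))
  have hwint : Integrable w (volume.restrict Ω) := hInt
  -- bound on the domain
  obtain ⟨R0, hR0⟩ := hΩb.subset_closedBall (0 : Euc n)
  set R : ℝ := max R0 1 with hRdef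
  have hR1 : (1:ℝ) ≤ R := le_max_right _ _
  have hR0' : (0:ℝ) < R := lt_of_lt_of_le one_pos hR1
  have hΩR : Ω ⊆ Metric.closedBall 0 R :=
    hR0.trans (closedBall_subset_closedBall (le_max_left _ _))
  have hcoordR : ∀ z ∈ Ω, ∀ i, |z i| ≤ R := by
    intro z hz i
    refine (coord_le_norm z i).trans ?_
    have := hΩR hz
    rwa [Metric.mem_closedBall, dist_zero_right] at this
  -- bound on u
  obtain ⟨M0, hM0⟩ := (hΩb.isCompact_closure).exists_bound_of_continuousOn hu.continuousOn
  set M : ℝ := max M0 0 with hMdef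
  have hM0' : (0:ℝ) ≤ M := le_max_right _ _
  have hM : ∀ z ∈ Ω, |u z| ≤ M := fun z hz => by
    have := hM0 z (subset_closure hz)
    rw [Real.norm_eq_abs] at this
    exact this.trans (le_max_left _ _)
  -- continuity of the last coordinate
  have hproj : Continuous fun z : Euc n => z (Fin.last n) :=
    (EuclideanSpace.proj (Fin.last n) : Euc n →L[ℝ] ℝ).continuous
  have hPnorm : ‖(EuclideanSpace.proj (Fin.last n) : Euc n →L[ℝ] ℝ)‖ ≤ 1 := by
    refine ContinuousLinearMap.opNorm_le_bound _ zero_le_one (fun v => ?_)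
    rw [one_mul]
    exact (Real.norm_eq_abs _).le.trans_eq' rfl |>.trans (coord_le_norm v _)
  -- slabs
  have hSmeas : ∀ c : ℝ, MeasurableSet {z : Euc n | |z (Fin.last n)| ≤ c} := by
    intro c
    exact measurableSet_le (hproj.abs.measurable) measurable_const
  have hindw : ∀ c : ℝ,
      Integrable (Set.indicator {z : Euc n | |z (Fin.last n)| ≤ c} w) (volume.restrict Ω) := by
    intro c
    refine hwint.mono (hwint.aestronglyMeasurable.indicator (hSmeas c))
      (Eventually.of_forall fun z => ?_)
    exact norm_indicator_le_norm_self w z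
  set A : ℝ → ℝ := fun c => ∫ z in Ω, Set.indicator {z : Euc n | |z (Fin.last n)| ≤ c} w z
    with hAdef
  have hA0 : ∀ c, 0 ≤ A c := fun c =>
    integral_nonneg fun z => Set.indicator_nonneg (fun t _ => hw0 t) z
  have hAmono : ∀ c d : ℝ, c ≤ d → A c ≤ A d := by
    intro c d hcd
    refine integral_mono_of_nonneg
      (Eventually.of_forall fun z => Set.indicator_nonneg (fun t _ => hw0 t) z)
      (hindw d) (Eventually.of_forall fun z => ?_)
    exact Set.indicator_le_indicator_of_subset
      (fun x hx => le_trans hx hcd) hw0 z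
  -- A tends to zero along the sequence 1/(k+1)
  have hBk : Tendsto (fun k : ℕ => A (1/((k:ℝ)+1))) atTop (𝓝 0) := by
    have h0 : ∀ᵐ z ∂(volume.restrict Ω), z (Fin.last n) ≠ 0 := ae_ne_last Ω 0
    have h := tendsto_integral_of_dominated_convergence (μ := volume.restrict Ω)
      (F := fun (k : ℕ) (z : Euc n) =>
        Set.indicator {z : Euc n | |z (Fin.last n)| ≤ 1/((k:ℝ)+1)} w z)
      (f := fun _ => (0:ℝ)) (bound := w)
      (fun k => (hindw _).aestronglyMeasurable)
      hwint
      (fun k => Eventually.of_forall fun z => by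
        calc ‖Set.indicator {z : Euc n | |z (Fin.last n)| ≤ 1/((k:ℝ)+1)} w z‖ ≤ ‖w z‖ :=
          norm_indicator_le_norm_self w z
        _ = w z := by rw [Real.norm_eq_abs, abs_of_nonneg (hw0 z)])
      (by
        filter_upwards [h0] with z hz
        have habs : 0 < |z (Fin.last n)| := abs_pos.mpr hz
        have hev : ∀ᶠ k : ℕ in atTop, (1/((k:ℝ)+1)) < |z (Fin.last n)| :=
          tendsto_one_div_add_atTop_nhds_zero_nat.eventually_lt_const habs
        refine Tendsto.congr' ?_ tendsto_const_nhds
        filter_upwards [hev] with k hk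
        have hnm : z ∉ {z : Euc n | |z (Fin.last n)| ≤ 1/((k:ℝ)+1)} :=
          fun h => absurd h (not_le.mpr hk)
        exact (Set.indicator_of_notMem hnm w).symm)
    simpa using h
  -- A tends to zero along the filter
  have hA : Tendsto A (𝓝[Set.Ioo (0:ℝ) 1] 0) (𝓝 0) := by
    rw [Metric.tendsto_nhds]
    intro ε hε
    obtain ⟨k, hk⟩ := (hBk.eventually_lt_const hε).exists
    have h5 : Set.Iio (1/((k:ℝ)+1)) ∈ 𝓝 (0:ℝ) := Iio_mem_nhds (by positivity)
    filter_upwards [nhdsWithin_le_nhds h5] with δ hδ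
    rw [Real.dist_eq, sub_zero, abs_of_nonneg (hA0 δ)]
    exact lt_of_le_of_lt (hAmono _ _ (le_of_lt hδ)) hk
  -- The key integral bound
  set K : ℝ := 4 * M^2 * (2*R)^n with hKdef
  have key : ∀ δ ∈ Set.Ioo (0:ℝ) 1,
      (∫ z in Ω, |z (Fin.last n)| ^ a *
        ((F δ (z (Fin.last n)) * u z - u z) ^ 2 +
          ‖gradient (fun w => F δ (w (Fin.last n)) * u w) z - gradient u z‖ ^ 2))
       ≤ 2 * A δ + K / Real.log (1/δ) := by
    intro δ hδm
    obtain ⟨hδ0, hδ1⟩ := hδm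
    set ℓ : ℝ := Real.log (1/δ) with hℓdef
    have hℓ : 0 < ℓ := Real.log_pos (by rw [lt_div_iff₀ hδ0]; linarith)
    have hδ2pos : 0 < δ^2 := by positivity
    have hδδ : δ^2 ≤ δ := by nlinarith
    -- the 1-dim building blocks
    set Sl : Set ℝ := Set.Icc (-δ) (-(δ^2)) ∪ Set.Icc (δ^2) δ with hSldef
    have hSlmeas : MeasurableSet Sl := (measurableSet_Icc).union measurableSet_Icc
    have hSlne0 : ∀ t ∈ Sl, t ≠ 0 := by
      rintro t (ht | ht) rfl
      · have := ht.2; simp at this; linarith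
      · have := ht.1; linarith
    have hmemSl : ∀ t : ℝ, δ^2 ≤ |t| → |t| ≤ δ → t ∈ Sl := by
      intro t h1 h2
      rcases le_or_gt 0 t with h | h
      · right; rw [abs_of_nonneg h] at h1 h2; exact ⟨h1, h2⟩
      · left; rw [abs_of_neg h] at h1 h2; constructor <;> linarith
    set qlast : ℝ → ℝ := Sl.indicator (fun t => |t|⁻¹) with hqlastdef
    set qco : ℝ → ℝ := (Set.Icc (-R) R).indicator (fun _ => (1:ℝ)) with hqcodef
    set q : Fin (n+1) → ℝ → ℝ := fun i => if i = Fin.last n then qlast else qco with hqdef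
    have hSlint : IntegrableOn (fun t : ℝ => |t|⁻¹) Sl := by
      refine ContinuousOn.integrableOn_compact (isCompact_Icc.union isCompact_Icc) ?_
      exact (continuous_abs.continuousOn).inv₀ fun t ht => abs_ne_zero.mpr (hSlne0 t ht)
    have hqlast_int : Integrable qlast := hSlint.integrable_indicator hSlmeas
    have hqco_int : Integrable qco := by
      refine (IntegrableOn.integrable_indicator ?_ measurableSet_Icc)
      refine (integrableOn_const_iff (C := (1:ℝ))).mpr (Or.inr ?_)
      rw [Real.volume_Icc]; exact ENNReal.ofReal_lt_top
    have hqlast_eq : q (Fin.last n) = qlast := if_pos rfl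
    have hqco_eq : ∀ i, i ≠ Fin.last n → q i = qco := fun i hi => if_neg hi
    have hq_int : ∀ i, Integrable (q i) := by
      intro i
      by_cases h : i = Fin.last n
      · rw [h, hqlast_eq]; exact hqlast_int
      · rw [hqco_eq i h]; exact hqco_int
    have hqnn : ∀ i t, 0 ≤ q i t := by
      intro i t
      by_cases h : i = Fin.last n
      · rw [h, hqlast_eq]
        exact Set.indicator_nonneg (fun s _ => inv_nonneg.mpr (abs_nonneg s)) t
      · rw [hqco_eq i h]
        exact Set.indicator_nonneg (fun s _ => zero_le_one) t
    have hDnn : ∀ z : Euc n, 0 ≤ ∏ i, q i (z i) :=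
      fun z => Finset.prod_nonneg fun i _ => hqnn i (z i)
    -- integrability over the Euclidean space
    have hDpi : Integrable (fun x : Fin (n+1) → ℝ => ∏ i, q i (x i)) :=
      Integrable.fintype_prod hq_int
    have hD : Integrable (fun z : Euc n => ∏ i, q i (z i)) volume := by
      have hmap := (EuclideanSpace.volume_preserving_symm_measurableEquiv_toLp (Fin (n+1))).map_eq
      rw [← hmap] at hDpi
      exact (integrable_map_equiv (MeasurableEquiv.toLp 2 (Fin (n+1) → ℝ)).symm
        (fun x : Fin (n+1) → ℝ => ∏ i, q i (x i))).mp hDpi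
    -- integral values
    have hqco_val : ∫ t, qco t = 2 * R := by
      rw [hqcodef, integral_indicator measurableSet_Icc, setIntegral_const, Real.volume_real_Icc_of_le (by linarith),
        smul_eq_mul, mul_one]
      ring
    have hpos_val : ∫ t in Set.Icc (δ^2) δ, |t|⁻¹ = ℓ := by
      rw [setIntegral_congr_fun measurableSet_Icc
        (fun t ht => by rw [abs_of_pos (lt_of_lt_of_le hδ2pos ht.1)])]
      rw [integral_Icc_eq_integral_Ioc, ← _root_.intervalIntegral.integral_of_le hδδ,
        _root_.integral_inv (by
          rw [Set.uIcc_of_le hδδ]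
          intro hmem
          exact absurd hmem.1 (not_le.mpr hδ2pos))]
      rw [show δ / δ ^ 2 = 1/δ by field_simp [pow_two], hℓdef]
    have hneg_val : ∫ t in Set.Icc (-δ) (-(δ^2)), |t|⁻¹ = ℓ := by
      have hle : -δ ≤ -(δ^2) := by linarith
      rw [setIntegral_congr_fun measurableSet_Icc
        (fun t ht => by
          rw [abs_of_neg (lt_of_le_of_lt ht.2 (by linarith)), inv_neg])]
      rw [integral_Icc_eq_integral_Ioc]
      have : ∫ t in Set.Ioc (-δ) (-(δ^2)), -t⁻¹ = - ∫ t in Set.Ioc (-δ) (-(δ^2)), t⁻¹ :=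
        integral_neg _
      rw [this, ← _root_.intervalIntegral.integral_of_le hle,
        _root_.integral_inv (by
          rw [Set.uIcc_of_le hle]
          intro hmem
          have := hmem.2; simp at this
          nlinarith [hmem.1])]
      have hdiv : (-(δ^2)) / (-δ) = δ := by
        rw [neg_div_neg_eq, pow_two]
        field_simp
      rw [hdiv, hℓdef, one_div, Real.log_inv]
    have hqlast_val : ∫ t, qlast t = 2 * ℓ := by
      have hdisj : Disjoint (Set.Icc (-δ) (-(δ^2))) (Set.Icc (δ^2) δ) := by
        rw [Set.disjoint_left]
        intro t ht ht'
        have := ht.2; have := ht'.1; nlinarith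
      rw [hqlastdef, integral_indicator hSlmeas, hSldef,
        setIntegral_union hdisj measurableSet_Icc
          (hSlint.mono_set Set.subset_union_left)
          (hSlint.mono_set Set.subset_union_right),
        hpos_val, hneg_val]
      ring
    have hDval : ∫ z : Euc n, (∏ i, q i (z i)) = (2*R)^n * (2*ℓ) := by
      have h1 : ∫ z : Euc n, (∏ i, q i (z i))
          = ∫ x : Fin (n+1) → ℝ, ∏ i, q i (x i) :=
        (EuclideanSpace.volume_preserving_symm_measurableEquiv_toLp (Fin (n+1))).integral_comp'
          (fun x : Fin (n+1) → ℝ => ∏ i, q i (x i))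
      rw [h1, MeasureTheory.integral_fintype_prod_volume_eq_prod]
      rw [← Finset.prod_erase_mul Finset.univ _ (Finset.mem_univ (Fin.last n))]
      have h2 : ∀ i ∈ Finset.univ.erase (Fin.last n), (∫ t, q i t) = 2 * R := by
        intro i hi
        rw [hqco_eq i (Finset.ne_of_mem_erase hi)]
        exact hqco_val
      rw [Finset.prod_congr rfl h2, Finset.prod_const, hqlast_eq, hqlast_val,
        Finset.card_erase_of_mem (Finset.mem_univ _), Finset.card_univ, Fintype.card_fin]
      simp
    have hDΩle : ∫ z in Ω, (∏ i, q i (z i)) ≤ (2*R)^n * (2*ℓ) := by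
      rw [← hDval]
      exact setIntegral_le_integral hD (Eventually.of_forall hDnn)
    set C2 : ℝ := 2 * M^2 / ℓ^2 with hC2def
    have hC20 : 0 ≤ C2 := by positivity
    -- the majorant
    have hmaj_int : Integrable (fun z =>
        2 * Set.indicator {z : Euc n | |z (Fin.last n)| ≤ δ} w z + C2 * ∏ i, q i (z i))
        (volume.restrict Ω) :=
      ((hindw δ).const_mul 2).add ((hD.restrict).const_mul C2)
    -- pointwise bound
    have hptwise : ∀ᵐ z ∂(volume.restrict Ω),
        |z (Fin.last n)| ^ a *
          ((F δ (z (Fin.last n)) * u z - u z) ^ 2 +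
            ‖gradient (fun w => F δ (w (Fin.last n)) * u w) z - gradient u z‖ ^ 2)
        ≤ 2 * Set.indicator {z : Euc n | |z (Fin.last n)| ≤ δ} w z + C2 * ∏ i, q i (z i) := by
      filter_upwards [ae_ne_last Ω (δ^2), ae_ne_last Ω (-(δ^2)), ae_ne_last Ω δ,
        ae_ne_last Ω (-δ), ae_restrict_mem hΩo.measurableSet] with z h1 h2 h3 h4 hzΩ
      set y : ℝ := z (Fin.last n) with hydef
      have hmajnn : 0 ≤ C2 * ∏ i, q i (z i) := mul_nonneg hC20 (hDnn z)
      have hindnn : 0 ≤ Set.indicator {z : Euc n | |z (Fin.last n)| ≤ δ} w z :=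
        Set.indicator_nonneg (fun t _ => hw0 t) z
      rcases lt_or_ge δ |y| with hyδ | hyδ
      · -- outer region : integrand vanishes
        have hF : F δ y = 1 := hF2 δ ⟨hδ0, hδ1⟩ y hyδ.le
        have hU : IsOpen {v : Euc n | δ < |v (Fin.last n)|} :=
          isOpen_Ioi.preimage (hproj.abs)
        have hEE : (fun v : Euc n => F δ (v (Fin.last n)) * u v) =ᶠ[𝓝 z] u := by
          filter_upwards [hU.mem_nhds hyδ] with v hv
          rw [hF2 δ ⟨hδ0, hδ1⟩ _ (le_of_lt hv), one_mul]
        rw [hEE.gradient_eq, hF]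
        simp only [one_mul, sub_self, norm_zero]
        norm_num
        exact add_nonneg (mul_nonneg (by norm_num) hindnn) hmajnn
      · -- |y| ≤ δ
        have hyδ2 : |y| ≠ δ^2 := by
          intro h
          rcases (abs_eq (le_of_lt hδ2pos)).mp h with h' | h'
          · exact h1 h'
          · exact h2 h'
        have hyδne : |y| ≠ δ := by
          intro h
          rcases (abs_eq (le_of_lt hδ0)).mp h with h' | h'
          · exact h3 h'
          · exact h4 h'
        have hyδ' : |y| < δ := lt_of_le_of_ne hyδ hyδne
        have hindval : Set.indicator {z : Euc n | |z (Fin.last n)| ≤ δ} w z = w z :=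
          Set.indicator_of_mem (show z ∈ {z : Euc n | |z (Fin.last n)| ≤ δ} from hyδ) w
        rcases lt_or_ge |y| (δ^2) with hy2 | hy2
        · -- inner region
          have hU : IsOpen {v : Euc n | |v (Fin.last n)| < δ^2} :=
            isOpen_Iio.preimage (hproj.abs)
          have hEE : (fun v : Euc n => F δ (v (Fin.last n)) * u v) =ᶠ[𝓝 z]
              (fun _ => (0:ℝ)) := by
            filter_upwards [hU.mem_nhds hy2] with v hv
            rw [hF0 δ ⟨hδ0, hδ1⟩ _ (le_of_lt hv), zero_mul]
          rw [hEE.gradient_eq, gradient_fun_const, hF0 δ ⟨hδ0, hδ1⟩ y hy2.le]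
          have heq : |y| ^ a * ((0 * u z - u z) ^ 2 + ‖(0:Euc n) - gradient u z‖ ^ 2)
              = w z := by
            rw [zero_mul, zero_sub, zero_sub, norm_neg, neg_sq, hwdef]
          rw [heq, hindval]
          linarith only [hw0 z, hmajnn]
        · -- middle region
          have hy2' : δ^2 < |y| := lt_of_le_of_ne hy2 (Ne.symm hyδ2)
          have hy0 : y ≠ 0 := by
            intro h
            rw [h, abs_zero] at hy2'
            exact absurd hy2' (lt_asymm hδ2pos)
          have hyabs : 0 < |y| := abs_pos.mpr hy0
          set ψ : ℝ → ℝ := fun t => (Real.log t - Real.log (δ^2)) / ℓ with hψdef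
          have hψF : ∀ t : ℝ, δ^2 ≤ |t| → |t| ≤ δ → F δ t = ψ t := by
            intro t ht1 ht2
            rw [hF1 δ ⟨hδ0, hδ1⟩ t ht1 ht2, Real.log_div
              (ne_of_gt (lt_of_lt_of_le hδ2pos ht1)) (ne_of_gt hδ2pos), Real.log_abs, hψdef,
              hℓdef]
          have hU : IsOpen {v : Euc n | δ^2 < |v (Fin.last n)| ∧ |v (Fin.last n)| < δ} := by
            have : {v : Euc n | δ^2 < |v (Fin.last n)| ∧ |v (Fin.last n)| < δ}
                = (fun v : Euc n => |v (Fin.last n)|) ⁻¹' (Set.Ioo (δ^2) δ) := rfl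
            rw [this]
            exact isOpen_Ioo.preimage (hproj.abs)
          have hEE : (fun v : Euc n => F δ (v (Fin.last n)) * u v) =ᶠ[𝓝 z]
              (fun v => ψ (v (Fin.last n)) * u v) := by
            filter_upwards [hU.mem_nhds ⟨hy2', hyδ'⟩] with v hv
            rw [hψF _ hv.1.le hv.2.le]
          -- derivative computation
          have hud : DifferentiableAt ℝ u z :=
            (hu.contDiffAt (mem_of_superset (hΩo.mem_nhds hzΩ) subset_closure)).differentiableAt
              (by simp)
          have hlog : HasDerivAt ψ (y⁻¹ / ℓ) y :=
            ((Real.hasDerivAt_log hy0).sub_const _).div_const _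
          have hL : HasFDerivAt (fun v : Euc n => v (Fin.last n))
              (EuclideanSpace.proj (Fin.last n) : Euc n →L[ℝ] ℝ) z :=
            (EuclideanSpace.proj (Fin.last n) : Euc n →L[ℝ] ℝ).hasFDerivAt
          have hcomp : HasFDerivAt (fun v : Euc n => ψ (v (Fin.last n)))
              ((y⁻¹ / ℓ) • (EuclideanSpace.proj (Fin.last n) : Euc n →L[ℝ] ℝ)) z :=
            by have := hlog.comp_hasFDerivAt z hL; exact this
          have hmul : HasFDerivAt (fun v : Euc n => ψ (v (Fin.last n)) * u v)
              (ψ y • (fderiv ℝ u z) +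
                u z • ((y⁻¹ / ℓ) • (EuclideanSpace.proj (Fin.last n) : Euc n →L[ℝ] ℝ))) z :=
            hcomp.mul hud.hasFDerivAt
          set Φ : Euc n →L[ℝ] ℝ := ψ y • (fderiv ℝ u z) +
              u z • ((y⁻¹ / ℓ) • (EuclideanSpace.proj (Fin.last n) : Euc n →L[ℝ] ℝ)) with hΦdef
          have hgrad1 : gradient (fun v : Euc n => F δ (v (Fin.last n)) * u v) z
              = (InnerProductSpace.toDual ℝ (Euc n)).symm Φ := by
            rw [hEE.gradient_eq]
            have : fderiv ℝ (fun v : Euc n => ψ (v (Fin.last n)) * u v) z = Φ := hmul.fderiv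
            rw [gradient, this]
          have hgrad2 : gradient u z = (InnerProductSpace.toDual ℝ (Euc n)).symm (fderiv ℝ u z) :=
            rfl
          have hnorm3 : ‖gradient (fun v : Euc n => F δ (v (Fin.last n)) * u v) z
              - gradient u z‖ = ‖Φ - fderiv ℝ u z‖ := by
            rw [hgrad1, hgrad2, ← map_sub, LinearIsometryEquiv.norm_map]
          -- estimates on ψ
          have hψy : 0 ≤ ψ y ∧ ψ y ≤ 1 := by
            have hnum0 : Real.log (δ^2) ≤ Real.log y := by
              rw [← Real.log_abs y]
              exact Real.log_le_log hδ2pos hy2'.le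
            have hnum1 : Real.log y ≤ Real.log δ := by
              rw [← Real.log_abs y]
              exact Real.log_le_log hyabs hyδ'.le
            have hnum2 : Real.log δ - Real.log (δ^2) = ℓ := by
              rw [Real.log_pow, hℓdef, one_div, Real.log_inv]
              push_cast
              ring
            constructor
            · exact div_nonneg (sub_nonneg.mpr hnum0) hℓ.le
            · show (Real.log y - Real.log (δ^2)) / ℓ ≤ 1
              rw [div_le_one hℓ]
              linarith only [hnum1, hnum2]
          have hψ1 : |ψ y - 1| ≤ 1 := by
            rw [abs_le]; constructor <;> linarith only [hψy.1, hψy.2]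
          -- norm estimate
          have hG : ‖fderiv ℝ u z‖ = ‖gradient u z‖ := by
            rw [hgrad2, LinearIsometryEquiv.norm_map]
          have hdecomp : Φ - fderiv ℝ u z = (ψ y - 1) • fderiv ℝ u z +
              (u z * (y⁻¹ / ℓ)) • (EuclideanSpace.proj (Fin.last n) : Euc n →L[ℝ] ℝ) := by
            rw [hΦdef, smul_smul, sub_smul, one_smul]
            abel
          have hB : |u z * (y⁻¹ / ℓ)| ≤ M * (|y|⁻¹ / ℓ) := by
            rw [abs_mul, abs_div, abs_inv]
            rw [abs_of_pos hℓ]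
            exact mul_le_mul_of_nonneg_right (hM z hzΩ)
              (div_nonneg (inv_nonneg.mpr (abs_nonneg y)) hℓ.le)
          have hnorm4 : ‖Φ - fderiv ℝ u z‖ ≤ ‖gradient u z‖ + M * (|y|⁻¹ / ℓ) := by
            rw [hdecomp]
            refine (norm_add_le _ _).trans (add_le_add ?_ ?_)
            · have hs1 := norm_smul_le (ψ y - 1) (fderiv ℝ u z)
              rw [Real.norm_eq_abs, hG] at hs1
              refine hs1.trans ?_
              calc |ψ y - 1| * ‖gradient u z‖ ≤ 1 * ‖gradient u z‖ :=
                mul_le_mul_of_nonneg_right hψ1 (norm_nonneg _)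
              _ = ‖gradient u z‖ := one_mul _
            · have hs2 := norm_smul_le (u z * (y⁻¹ / ℓ))
                (EuclideanSpace.proj (Fin.last n) : Euc n →L[ℝ] ℝ)
              rw [Real.norm_eq_abs] at hs2
              refine hs2.trans ?_
              calc |u z * (y⁻¹ / ℓ)| * ‖(EuclideanSpace.proj (Fin.last n) : Euc n →L[ℝ] ℝ)‖
                  ≤ |u z * (y⁻¹ / ℓ)| * 1 := mul_le_mul_of_nonneg_left hPnorm (abs_nonneg _)
              _ = |u z * (y⁻¹ / ℓ)| := mul_one _
              _ ≤ M * (|y|⁻¹ / ℓ) := hB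
          -- first term
          have hFy : F δ y = ψ y := hψF y hy2'.le hyδ'.le
          have hterm1 : (F δ y * u z - u z)^2 ≤ (u z)^2 := by
            rw [hFy]
            have : ψ y * u z - u z = (ψ y - 1) * u z := by ring
            rw [this, mul_pow]
            have h2 : (ψ y - 1)^2 ≤ 1 := by
              have := sq_le_sq' (abs_le.mp hψ1).1 (abs_le.mp hψ1).2
              simpa using this
            calc (ψ y - 1)^2 * u z^2 ≤ 1 * u z^2 :=
              mul_le_mul_of_nonneg_right h2 (sq_nonneg _)
            _ = u z^2 := one_mul _
          -- second term
          have hterm2 : ‖gradient (fun v : Euc n => F δ (v (Fin.last n)) * u v) z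
              - gradient u z‖^2 ≤ 2*‖gradient u z‖^2 + 2*(M * (|y|⁻¹ / ℓ))^2 := by
            rw [hnorm3]
            have h1 : ‖Φ - fderiv ℝ u z‖^2 ≤ (‖gradient u z‖ + M * (|y|⁻¹ / ℓ))^2 :=
              pow_le_pow_left₀ (norm_nonneg _) hnorm4 2
            exact h1.trans (sq_add_le_two_sq _ _)
          -- weight estimates
          have hrw : |y| ^ a * (|y|⁻¹)^2 ≤ |y|⁻¹ := by
            have e1 : |y| ^ (a - 2) = |y| ^ a * (|y|⁻¹)^2 := by
              rw [Real.rpow_sub hyabs, div_eq_mul_inv,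
                show ((2:ℝ)) = ((2:ℕ):ℝ) by norm_num, Real.rpow_natCast, ← inv_pow]
            have e2 : |y| ^ (a - 2) ≤ |y| ^ (-1 : ℝ) :=
              Real.rpow_le_rpow_of_exponent_ge hyabs
                (le_trans hyδ'.le hδ1.le) (by linarith only [ha])
            rw [← e1]
            exact e2.trans_eq (Real.rpow_neg_one |y|)
          have hDz : (∏ i, q i (z i)) = |y|⁻¹ := by
            rw [← Finset.prod_erase_mul Finset.univ _ (Finset.mem_univ (Fin.last n))]
            have h2 : ∀ i ∈ Finset.univ.erase (Fin.last n), q i (z i) = 1 := by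
              intro i hi
              rw [hqco_eq i (Finset.ne_of_mem_erase hi), hqcodef]
              refine Set.indicator_of_mem ?_ _
              have := abs_le.mp (hcoordR z hzΩ i)
              exact Set.mem_Icc.mpr ⟨this.1, this.2⟩
            rw [Finset.prod_congr rfl h2, Finset.prod_const, one_pow, one_mul, hqlast_eq,
              hqlastdef]
            exact Set.indicator_of_mem (hmemSl y hy2'.le hyδ'.le) _
          -- put it together
          have hwa : 0 ≤ |y| ^ a := Real.rpow_nonneg (abs_nonneg y) a
          have hfinal : |y| ^ a *
              ((F δ y * u z - u z) ^ 2 +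
                ‖gradient (fun v : Euc n => F δ (v (Fin.last n)) * u v) z - gradient u z‖ ^ 2)
              ≤ 2 * w z + C2 * |y|⁻¹ := by
            have s1 : |y| ^ a *
                ((F δ y * u z - u z) ^ 2 +
                  ‖gradient (fun v : Euc n => F δ (v (Fin.last n)) * u v) z - gradient u z‖ ^ 2)
                ≤ |y| ^ a * ((u z)^2 + (2*‖gradient u z‖^2 + 2*(M * (|y|⁻¹ / ℓ))^2)) := by
              refine mul_le_mul_of_nonneg_left ?_ hwa
              linarith only [hterm1, hterm2]
            refine s1.trans ?_
            have s2 : |y| ^ a * ((u z)^2 + 2*‖gradient u z‖^2) ≤ 2 * w z := by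
              rw [hwdef]
              have : (u z)^2 + 2*‖gradient u z‖^2 ≤ 2 * ((u z)^2 + ‖gradient u z‖^2) := by
                linarith only [sq_nonneg (u z)]
              calc |y| ^ a * ((u z)^2 + 2*‖gradient u z‖^2)
                  ≤ |y| ^ a * (2 * ((u z)^2 + ‖gradient u z‖^2)) :=
                    mul_le_mul_of_nonneg_left this hwa
              _ = 2 * (|y| ^ a * ((u z)^2 + ‖gradient u z‖^2)) := by ring
            have s3 : |y| ^ a * (2*(M * (|y|⁻¹ / ℓ))^2) ≤ C2 * |y|⁻¹ := by
              have e3 : |y| ^ a * (2*(M * (|y|⁻¹ / ℓ))^2)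
                  = (2 * M^2 / ℓ^2) * (|y| ^ a * (|y|⁻¹)^2) := by
                ring
              rw [e3, hC2def]
              exact mul_le_mul_of_nonneg_left hrw (by positivity)
            calc |y| ^ a * ((u z)^2 + (2*‖gradient u z‖^2 + 2*(M * (|y|⁻¹ / ℓ))^2))
                = |y| ^ a * ((u z)^2 + 2*‖gradient u z‖^2)
                  + |y| ^ a * (2*(M * (|y|⁻¹ / ℓ))^2) := by ring
            _ ≤ 2 * w z + C2 * |y|⁻¹ := add_le_add s2 s3
          rw [hindval, hDz]
          exact hfinal
    -- integrate the pointwise bound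
    have hIle : (∫ z in Ω, |z (Fin.last n)| ^ a *
        ((F δ (z (Fin.last n)) * u z - u z) ^ 2 +
          ‖gradient (fun w => F δ (w (Fin.last n)) * u w) z - gradient u z‖ ^ 2))
        ≤ ∫ z in Ω,
          (2 * Set.indicator {z : Euc n | |z (Fin.last n)| ≤ δ} w z + C2 * ∏ i, q i (z i)) := by
      refine integral_mono_of_nonneg (Eventually.of_forall fun z => ?_) hmaj_int hptwise
      exact mul_nonneg (Real.rpow_nonneg (abs_nonneg _) a)
        (add_nonneg (sq_nonneg _) (sq_nonneg _))
    refine hIle.trans ?_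
    rw [integral_add ((hindw δ).const_mul 2) ((hD.restrict).const_mul C2),
      integral_const_mul, integral_const_mul]
    have hAeq : (∫ z in Ω, Set.indicator {z : Euc n | |z (Fin.last n)| ≤ δ} w z) = A δ := rfl
    rw [hAeq]
    have hC2bound : C2 * ∫ z in Ω, (∏ i, q i (z i)) ≤ K / ℓ := by
      calc C2 * ∫ z in Ω, (∏ i, q i (z i)) ≤ C2 * ((2*R)^n * (2*ℓ)) :=
        mul_le_mul_of_nonneg_left hDΩle hC20
      _ = K / ℓ := by
          rw [hC2def, hKdef]
          field_simp
          ring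
    linarith only [hC2bound]
  -- conclude with the squeeze theorem
  have hK2 : Tendsto (fun δ : ℝ => K / Real.log (1/δ)) (𝓝[Set.Ioo (0:ℝ) 1] 0) (𝓝 0) := by
    have l1 : Tendsto (fun δ : ℝ => 1/δ) (𝓝[Set.Ioo (0:ℝ) 1] 0) atTop := by
      have := tendsto_inv_nhdsGT_zero (𝕜 := ℝ)
      have hle : 𝓝[Set.Ioo (0:ℝ) 1] (0:ℝ) ≤ 𝓝[Set.Ioi (0:ℝ)] 0 :=
        nhdsWithin_mono _ Set.Ioo_subset_Ioi_self
      simpa [one_div] using this.mono_left hle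
    have l2 : Tendsto (fun δ : ℝ => Real.log (1/δ)) (𝓝[Set.Ioo (0:ℝ) 1] 0) atTop :=
      Real.tendsto_log_atTop.comp l1
    have l3 : Tendsto (fun δ : ℝ => (Real.log (1/δ))⁻¹) (𝓝[Set.Ioo (0:ℝ) 1] 0) (𝓝 0) :=
      tendsto_inv_atTop_zero.comp l2
    have := l3.const_mul K
    simpa [div_eq_mul_inv] using this
  have hBB : Tendsto (fun δ : ℝ => 2 * A δ + K / Real.log (1/δ))
      (𝓝[Set.Ioo (0:ℝ) 1] 0) (𝓝 0) := by
    have := (hA.const_mul 2).add hK2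
    simpa using this
  refine squeeze_zero' (Eventually.of_forall fun δ => ?_) ?_ hBB
  · refine integral_nonneg fun z => ?_
    exact mul_nonneg (Real.rpow_nonneg (abs_nonneg _) a)
      (add_nonneg (sq_nonneg _) (sq_nonneg _))
  · filter_upwards [self_mem_nhdsWithin] with δ hδ
    exact key δ hδ
end

section
/- Let a > −1 and let u be a smooth even-in-y solution of −div(|y|^a ∇u) = |y|^a f in B₁ with f continuous and even in y. Then pointwise on B₁⁺ one has the identity y^a ∂_y u(x,y) = −∫₀^y t^a (Δ_x u(x,t) + f(x,t)) dt, and consequently the quotient G u(x,y) = ∂_y u(x,y)/y satisfies G u(x,y) = y^{−1−a} ∫₀^y t^a (g(x,t) − g(x,0)) dt + g(x,0)/(1+a), where g = −Δ_x u − f. -/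
open MeasureTheory Metric Real

/-- Divergence of a vector field on `ℝ^m`. -/
noncomputable def vdiv {m : ℕ} (V : EuclideanSpace ℝ (Fin m) → EuclideanSpace ℝ (Fin m))
    (z : EuclideanSpace ℝ (Fin m)) : ℝ :=
  ∑ i, fderiv ℝ V z (EuclideanSpace.single i 1) i

/-- Partial derivative in the `y` (last) direction. -/
noncomputable def pdy {n : ℕ} (g : Euc n → ℝ) (z : Euc n) : ℝ :=
  fderiv ℝ g z (EuclideanSpace.single (Fin.last n) 1)

/-- Laplacian in the `x` variables only. -/
noncomputable def laplX {n : ℕ} (g : Euc n → ℝ) (z : Euc n) : ℝ :=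
  ∑ i : Fin n, fderiv ℝ (fun w => fderiv ℝ g w (EuclideanSpace.single i.castSucc 1)) z
    (EuclideanSpace.single i.castSucc 1)

/-- The point `(x, t)` obtained from `z = (x, y)` by replacing the last coordinate by `t`. -/
noncomputable def setY {n : ℕ} (z : Euc n) (t : ℝ) : Euc n :=
  z + (t - z (Fin.last n)) • EuclideanSpace.single (Fin.last n) (1 : ℝ)

/-- Reflection `(x,y) ↦ (x,-y)`. -/
noncomputable def reflY {n : ℕ} (z : Euc n) : Euc n :=
  z - (2 * z (Fin.last n)) • EuclideanSpace.single (Fin.last n) (1 : ℝ)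

/- ### Auxiliary lemmas -/

lemma grad_coord {m : ℕ} (u : EuclideanSpace ℝ (Fin m) → ℝ) (z : EuclideanSpace ℝ (Fin m))
    (i : Fin m) : gradient u z i = fderiv ℝ u z (EuclideanSpace.single i 1) := by
  have h1 : (inner ℝ (gradient u z) (EuclideanSpace.single i (1:ℝ)) : ℝ)
      = fderiv ℝ u z (EuclideanSpace.single i 1) := by
    rw [gradient, InnerProductSpace.toDual_symm_apply]
  rw [← h1, EuclideanSpace.inner_single_right]
  simp

lemma grad_differentiable {m : ℕ} (u : EuclideanSpace ℝ (Fin m) → ℝ)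
    (hu : ContDiff ℝ (⊤ : ℕ∞) u) : Differentiable ℝ (gradient u) := by
  have : gradient u = fun z =>
      (InnerProductSpace.toDual ℝ (EuclideanSpace ℝ (Fin m))).symm (fderiv ℝ u z) := rfl
  rw [this]
  exact (InnerProductSpace.toDual ℝ _).symm.toContinuousLinearEquiv.differentiable.comp
    ((hu.fderiv_right (m := 1) (WithTop.coe_le_coe.mpr le_top)).differentiable one_ne_zero)

lemma contDiff_fderiv_apply {m : ℕ} (u : EuclideanSpace ℝ (Fin m) → ℝ)
    (hu : ContDiff ℝ (⊤ : ℕ∞) u) (v : EuclideanSpace ℝ (Fin m)) :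
    ContDiff ℝ (⊤ : ℕ∞) (fun z => fderiv ℝ u z v) :=
  (ContinuousLinearMap.apply ℝ ℝ v).contDiff.comp (hu.fderiv_right (by simp))

lemma vdiv_eq {m : ℕ} (a : ℝ) (u : EuclideanSpace ℝ (Fin m) → ℝ) (hu : ContDiff ℝ (⊤ : ℕ∞) u)
    (N : Fin m) (w : EuclideanSpace ℝ (Fin m)) (ht : 0 < w N) :
    vdiv (fun z => (|z N| ^ a) • gradient u z) w =
      a * (w N) ^ (a - 1) * fderiv ℝ u w (EuclideanSpace.single N 1) +
      (w N) ^ a * ∑ i, fderiv ℝ (fun z => fderiv ℝ u z (EuclideanSpace.single i 1)) w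
        (EuclideanSpace.single i 1) := by
  set t := w N with htdef
  have hproj : HasFDerivAt (fun z : EuclideanSpace ℝ (Fin m) => z N)
      (EuclideanSpace.proj N : EuclideanSpace ℝ (Fin m) →L[ℝ] ℝ) w := by
    have := ContinuousLinearMap.hasFDerivAt (x := w)
      (EuclideanSpace.proj N : EuclideanSpace ℝ (Fin m) →L[ℝ] ℝ)
    exact this
  have hc0 : HasFDerivAt (fun z : EuclideanSpace ℝ (Fin m) => (z N) ^ a)
      ((a * t ^ (a - 1)) • (EuclideanSpace.proj N : EuclideanSpace ℝ (Fin m) →L[ℝ] ℝ)) w :=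
    by have := (Real.hasDerivAt_rpow_const (p := a) (Or.inl (ne_of_gt ht))).comp_hasFDerivAt w hproj; exact this
  have hev : (fun z : EuclideanSpace ℝ (Fin m) => |z N| ^ a) =ᶠ[nhds w]
      (fun z => (z N) ^ a) := by
    have hcont : Continuous (fun z : EuclideanSpace ℝ (Fin m) => z N) :=
      (EuclideanSpace.proj N).continuous
    filter_upwards [hcont.continuousAt.preimage_mem_nhds (Ioi_mem_nhds ht)] with z hz
    rw [abs_of_pos hz]
  have hc : HasFDerivAt (fun z : EuclideanSpace ℝ (Fin m) => |z N| ^ a)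
      ((a * t ^ (a - 1)) • (EuclideanSpace.proj N : EuclideanSpace ℝ (Fin m) →L[ℝ] ℝ)) w :=
    hc0.congr_of_eventuallyEq hev
  have hG : HasFDerivAt (gradient u) (fderiv ℝ (gradient u) w) w :=
    ((grad_differentiable u hu) w).hasFDerivAt
  have hV : HasFDerivAt (fun z => (|z N| ^ a) • gradient u z)
      (|t| ^ a • fderiv ℝ (gradient u) w +
        ((a * t ^ (a - 1)) • (EuclideanSpace.proj N :
          EuclideanSpace ℝ (Fin m) →L[ℝ] ℝ)).smulRight (gradient u w)) w :=
    hc.smul hG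
  have hfd := hV.fderiv
  unfold vdiv
  rw [hfd]
  have habs : |t| = t := abs_of_pos ht
  have hgco : ∀ i, fderiv ℝ (gradient u) w (EuclideanSpace.single i 1) i =
      fderiv ℝ (fun z => fderiv ℝ u z (EuclideanSpace.single i 1)) w
        (EuclideanSpace.single i 1) := by
    intro i
    have hcomp : fderiv ℝ ((EuclideanSpace.proj i : EuclideanSpace ℝ (Fin m) →L[ℝ] ℝ)
          ∘ (gradient u)) w =
        ((EuclideanSpace.proj i : EuclideanSpace ℝ (Fin m) →L[ℝ] ℝ)).comp
          (fderiv ℝ (gradient u) w) :=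
      (((EuclideanSpace.proj i : EuclideanSpace ℝ (Fin m) →L[ℝ] ℝ)).hasFDerivAt.comp w hG).fderiv
    rw [show ((EuclideanSpace.proj i : EuclideanSpace ℝ (Fin m) →L[ℝ] ℝ)) ∘ (gradient u) =
        (fun z => (EuclideanSpace.proj i) (gradient u z)) from rfl] at hcomp
    have h1 : (fun z : EuclideanSpace ℝ (Fin m) => (EuclideanSpace.proj i) (gradient u z)) =
        fun z => fderiv ℝ u z (EuclideanSpace.single i 1) := by
      funext z; exact grad_coord u z i
    rw [← h1]
    have := congrArg (fun L : EuclideanSpace ℝ (Fin m) →L[ℝ] ℝ =>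
      L (EuclideanSpace.single i 1)) hcomp
    simp only [ContinuousLinearMap.comp_apply] at this
    rw [this]
    rfl
  have hsum : ∀ i : Fin m,
      (|t| ^ a • fderiv ℝ (gradient u) w +
        ((a * t ^ (a - 1)) • (EuclideanSpace.proj N :
          EuclideanSpace ℝ (Fin m) →L[ℝ] ℝ)).smulRight (gradient u w))
        (EuclideanSpace.single i 1) i =
      t ^ a * (fderiv ℝ (fun z => fderiv ℝ u z (EuclideanSpace.single i 1)) w
        (EuclideanSpace.single i 1)) +
      (a * t ^ (a-1)) * (if i = N then 1 else 0) * gradient u w i := by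
    intro i
    rw [ContinuousLinearMap.add_apply, ContinuousLinearMap.smul_apply,
      ContinuousLinearMap.smulRight_apply, ContinuousLinearMap.smul_apply]
    rw [PiLp.add_apply, PiLp.smul_apply, PiLp.smul_apply]
    rw [habs, hgco i]
    rcases eq_or_ne i N with h | h
    · subst h
      simp only [smul_eq_mul, PiLp.proj_apply, EuclideanSpace.single_apply, if_pos rfl]
      try ring
    · simp only [smul_eq_mul, PiLp.proj_apply, EuclideanSpace.single_apply, if_neg h,
        if_neg (Ne.symm h)]
      try ring
  rw [Finset.sum_congr rfl (fun i _ => hsum i), Finset.sum_add_distrib]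
  have hA : ∑ i : Fin m, t ^ a * (fderiv ℝ (fun z => fderiv ℝ u z (EuclideanSpace.single i 1)) w
      (EuclideanSpace.single i 1)) =
      t ^ a * ∑ i, fderiv ℝ (fun z => fderiv ℝ u z (EuclideanSpace.single i 1)) w
        (EuclideanSpace.single i 1) := by
    rw [Finset.mul_sum]
  have hB : ∑ i : Fin m, (a * t ^ (a-1) * (if i = N then 1 else 0)) * gradient u w i =
      a * t ^ (a-1) * fderiv ℝ u w (EuclideanSpace.single N 1) := by
    rw [Finset.sum_eq_single N]
    · rw [grad_coord]; simp
    · intro b _ hb; simp [hb]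
    · intro h; exact absurd (Finset.mem_univ N) h
  rw [hA, hB]
  ring

lemma setY_apply {n : ℕ} (z : Euc n) (t : ℝ) (j : Fin (n+1)) :
    setY z t j = if j = Fin.last n then t else z j := by
  simp only [setY, PiLp.add_apply, PiLp.smul_apply, EuclideanSpace.single_apply, smul_eq_mul]
  split
  · rename_i h; subst h; ring
  · simp_all

lemma setY_last {n : ℕ} (z : Euc n) (t : ℝ) : setY z t (Fin.last n) = t := by
  simp [setY_apply]

lemma setY_self {n : ℕ} (z : Euc n) : setY z (z (Fin.last n)) = z := by
  simp [setY]

lemma setY_mem_ball {n : ℕ} (z : Euc n) (hz : z ∈ ball (0 : Euc n) 1) (t : ℝ)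
    (ht : |t| ≤ |z (Fin.last n)|) : setY z t ∈ ball (0 : Euc n) 1 := by
  rw [mem_ball_zero_iff] at hz ⊢
  refine lt_of_le_of_lt ?_ hz
  rw [EuclideanSpace.norm_eq, EuclideanSpace.norm_eq]
  apply Real.sqrt_le_sqrt
  apply Finset.sum_le_sum
  intro j _
  rw [setY_apply]
  split
  · rename_i h; subst h; simp only [Real.norm_eq_abs]
    exact pow_le_pow_left₀ (abs_nonneg _) ht 2
  · exact le_rfl

noncomputable def reflL (n : ℕ) : Euc n →L[ℝ] Euc n :=
  ContinuousLinearMap.id ℝ (Euc n) -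
    (2:ℝ) • ((EuclideanSpace.proj (Fin.last n)).smulRight
      (EuclideanSpace.single (Fin.last n) (1:ℝ)))

set_option synthInstance.maxHeartbeats 1000000 in
lemma reflL_eq {n : ℕ} (z : Euc n) : reflL n z = reflY z := by
  simp [reflL, reflY, ContinuousLinearMap.smul_apply, two_smul]
  module

lemma pdy_eq_zero_of_even {n : ℕ} (u : Euc n → ℝ) (hu : ContDiff ℝ (⊤ : ℕ∞) u)
    (hueven : ∀ z : Euc n, u (reflY z) = u z) (w : Euc n) (hw : w (Fin.last n) = 0) :
    pdy u w = 0 := by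
  have hRw : reflL n w = w := by
    rw [reflL_eq]; simp [reflY, hw]
  have hcomp : u ∘ (reflL n) = u := by
    funext z; simp [Function.comp, reflL_eq, hueven]
  have hd : fderiv ℝ (u ∘ (reflL n)) w =
      (fderiv ℝ u (reflL n w)).comp (reflL n) := by
    rw [fderiv_comp w ((hu.differentiable (by simp)).differentiableAt) (reflL n).differentiableAt,
      (reflL n).fderiv]
  have h2 : fderiv ℝ u w = (fderiv ℝ u w).comp (reflL n) := by
    rw [← hRw]; rw [← hd, hcomp, hRw]
  have h3 : reflL n (EuclideanSpace.single (Fin.last n) (1:ℝ)) =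
      -(EuclideanSpace.single (Fin.last n) (1:ℝ)) := by
    simp [reflL]
    module
  have := congrArg (fun L : Euc n →L[ℝ] ℝ => L (EuclideanSpace.single (Fin.last n) (1:ℝ))) h2
  simp only [ContinuousLinearMap.comp_apply, h3, map_neg] at this
  unfold pdy
  linarith

/-- for `a > -1` and a smooth even-in-`y` solution `u` of
`-div(|y|^a ∇u) = |y|^a f` in `B₁` with `f` continuous and even in `y`, one has on `B₁⁺`
the identity `y^a ∂_y u(x,y) = -∫₀^y t^a (Δ_x u(x,t) + f(x,t)) dt`, and consequently
`∂_y u(x,y)/y = y^{-1-a} ∫₀^y t^a (g(x,t) - g(x,0)) dt + g(x,0)/(1+a)` with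
`g = -Δ_x u - f`. -/
theorem stmt13 (n : ℕ) (a : ℝ) (ha : -1 < a)
    (u f : Euc n → ℝ) (hu : ContDiff ℝ (⊤ : ℕ∞) u) (hf : Continuous f)
    (hueven : ∀ z : Euc n, u (reflY z) = u z)
    (hfeven : ∀ z : Euc n, f (reflY z) = f z)
    (hsol : ∀ z ∈ ball (0 : Euc n) 1, z (Fin.last n) ≠ 0 →
      vdiv (fun z : Euc n => (|z (Fin.last n)| ^ a) • gradient u z) z =
        -(|z (Fin.last n)| ^ a * f z)) :
    ∀ z ∈ ball (0 : Euc n) 1, 0 < z (Fin.last n) →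
      ((z (Fin.last n)) ^ a * pdy u z =
        -∫ t in Set.Ioo (0 : ℝ) (z (Fin.last n)),
          t ^ a * (laplX u (setY z t) + f (setY z t))) ∧
      (pdy u z / z (Fin.last n) =
        (z (Fin.last n)) ^ (-(1 + a)) *
          (∫ t in Set.Ioo (0 : ℝ) (z (Fin.last n)),
            t ^ a * ((-(laplX u (setY z t) + f (setY z t))) -
              (-(laplX u (setY z 0) + f (setY z 0))))) +
          (-(laplX u (setY z 0) + f (setY z 0))) / (1 + a)) := by
  intro z hz hy
  set N := Fin.last n with hN
  set y := z N with hydef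
  set e : Euc n := EuclideanSpace.single N 1 with he
  -- the function on the segment
  set φ : ℝ → ℝ := fun t => pdy u (setY z t) with hφdef
  set A : ℝ → ℝ := fun t => laplX u (setY z t) + f (setY z t) with hAdef
  set F : ℝ → ℝ := fun t => t ^ a * φ t with hFdef
  -- derivative of setY
  have hsetYd : ∀ t : ℝ, HasDerivAt (fun s => setY z s) e t := by
    intro t
    have h1 : HasDerivAt (fun s : ℝ => s - z N) 1 t := (hasDerivAt_id t).sub_const _
    have h2 := (h1.smul_const (EuclideanSpace.single N (1:ℝ))).const_add z
    simpa [setY] using h2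
  have hpdyCD : ContDiff ℝ (⊤ : ℕ∞) (pdy u) := contDiff_fderiv_apply u hu e
  have hφd : ∀ t : ℝ, HasDerivAt φ (fderiv ℝ (pdy u) (setY z t) e) t := by
    intro t
    exact (((hpdyCD.differentiable (by simp)) (setY z t)).hasFDerivAt).comp_hasDerivAt t (hsetYd t)
  -- evaluate the divergence identity along the segment
  have hkey : ∀ t ∈ Set.Ioo (0:ℝ) y, HasDerivAt F (-(t ^ a * A t)) t := by
    intro t htI
    obtain ⟨ht0, hty⟩ := htI
    set w : Euc n := setY z t with hw
    have hwN : w N = t := setY_last z t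
    have hwb : w ∈ ball (0 : Euc n) 1 := by
      apply setY_mem_ball z hz
      rw [abs_of_pos ht0, abs_of_pos hy]
      exact le_of_lt hty
    have hsolw := hsol w hwb (by rw [hwN]; exact ne_of_gt ht0)
    have hdiv := vdiv_eq a u hu N w (by rw [hwN]; exact ht0)
    rw [hsolw] at hdiv
    -- split the full sum
    have hsplit : ∑ i, fderiv ℝ (fun z' => fderiv ℝ u z' (EuclideanSpace.single i 1)) w
        (EuclideanSpace.single i 1) = laplX u w +
        fderiv ℝ (fun z' => fderiv ℝ u z' e) w e := by
      rw [Fin.sum_univ_castSucc]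
      rfl
    rw [hsplit, hwN, abs_of_pos ht0] at hdiv
    have hpdy_eq : (pdy u : Euc n → ℝ) = fun z' => fderiv ℝ u z' e := rfl
    have hDe : fderiv ℝ (pdy u) w e = fderiv ℝ (fun z' => fderiv ℝ u z' e) w e := by
      rw [hpdy_eq]
    have h1 : HasDerivAt (fun s : ℝ => s ^ a) (a * t ^ (a-1)) t :=
      Real.hasDerivAt_rpow_const (Or.inl (ne_of_gt ht0))
    have hprod := h1.mul (hφd t)
    have hφt : φ t = fderiv ℝ u w e := rfl
    rw [← he] at hdiv
    refine (hprod.congr_deriv ?_ : _)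
    symm
    rw [hDe, hφt]
    have hthis : t ^ a * fderiv ℝ (fun z' => fderiv ℝ u z' e) w e =
        -(t ^ a * f w) - a * t ^ (a-1) * fderiv ℝ u w e - t ^ a * laplX u w := by
      linarith [hdiv]
    rw [hAdef]
    simp only []
    rw [show laplX u (setY z t) + f (setY z t) = laplX u w + f w from rfl]
    rw [hthis]
    ring
  -- continuity of the integrand factor
  have hsetYc : Continuous (fun t : ℝ => setY z t) := by
    unfold setY
    exact continuous_const.add ((continuous_id.sub continuous_const).smul continuous_const)
  have hlaplc : Continuous (laplX u) := by
    unfold laplX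
    apply continuous_finset_sum
    intro i _
    exact ((contDiff_fderiv_apply _ (contDiff_fderiv_apply u hu _) _).continuous)
  have hAc : Continuous A := ((hlaplc.comp hsetYc).add (hf.comp hsetYc))
  -- integrability
  have hbase : IntervalIntegrable (fun t : ℝ => t ^ a) volume 0 y :=
    intervalIntegral.intervalIntegrable_rpow' ha
  have hint : IntervalIntegrable (fun t => t ^ a * A t) volume 0 y := by
    have := hbase.mul_continuousOn (g := A) (hAc.continuousOn)
    simpa using this
  -- limit of F at 0⁺
  have hφ0 : φ 0 = 0 := by
    apply pdy_eq_zero_of_even u hu hueven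
    exact setY_last z 0
  have hlim0 : Filter.Tendsto F (nhdsWithin 0 (Set.Ioi 0)) (nhds 0) := by
    have hslope : Filter.Tendsto (slope φ 0) (nhdsWithin 0 {0}ᶜ)
        (nhds (fderiv ℝ (pdy u) (setY z 0) e)) :=
      hasDerivAt_iff_tendsto_slope.mp (hφd 0)
    have hslope' : Filter.Tendsto (slope φ 0) (nhdsWithin 0 (Set.Ioi 0))
        (nhds (fderiv ℝ (pdy u) (setY z 0) e)) :=
      hslope.mono_left (nhdsWithin_mono _ (fun x hx => ne_of_gt hx))
    have hpow : Filter.Tendsto (fun t : ℝ => t ^ (a+1)) (nhdsWithin 0 (Set.Ioi 0))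
        (nhds 0) := by
      have hc : ContinuousAt (fun t : ℝ => t ^ (a+1)) 0 :=
        Real.continuousAt_rpow_const 0 (a+1) (Or.inr (by linarith))
      have := hc.tendsto.mono_left (nhdsWithin_le_nhds (s := Set.Ioi (0:ℝ)))
      rwa [Real.zero_rpow (by linarith : a + 1 ≠ 0)] at this
    have hmul := hpow.mul hslope'
    rw [zero_mul] at hmul
    apply hmul.congr'
    filter_upwards [self_mem_nhdsWithin] with t ht
    have ht0 : (0:ℝ) < t := ht
    rw [slope_def_field, hφ0]
    rw [hFdef]
    simp only []
    rw [Real.rpow_add_one (ne_of_gt ht0)]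
    field_simp
    ring
    field_simp
  -- limit of F at y⁻
  have hFcy : ContinuousAt F y := by
    apply ContinuousAt.mul
    · exact Real.continuousAt_rpow_const y a (Or.inl (ne_of_gt hy))
    · exact ((hpdyCD.continuous).comp hsetYc).continuousAt
  have hlimy : Filter.Tendsto F (nhdsWithin y (Set.Iio y)) (nhds (F y)) :=
    hFcy.tendsto.mono_left nhdsWithin_le_nhds
  -- FTC
  have hFTC := intervalIntegral.integral_eq_sub_of_hasDerivAt_of_tendsto hy hkey
    (hint.neg) hlim0 hlimy
  -- rewrite interval integral as Ioo integral
  have hIoo : ∀ h : ℝ → ℝ, ∫ t in (0:ℝ)..y, h t = ∫ t in Set.Ioo (0:ℝ) y, h t := by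
    intro h
    rw [intervalIntegral.integral_of_le (le_of_lt hy), integral_Ioc_eq_integral_Ioo]
  have hFy : F y = y ^ a * pdy u z := by
    rw [hFdef]
    simp only []
    rw [hφdef]
    simp only []
    have hsy : setY z y = z := by rw [hydef]; exact setY_self z
    rw [hsy]
  set I : ℝ := ∫ t in Set.Ioo (0:ℝ) y, t ^ a * A t with hI
  have hpart1 : y ^ a * pdy u z = -I := by
    rw [← hFy]
    have : ∫ t in (0:ℝ)..y, -(t ^ a * A t) = F y - 0 := hFTC
    rw [intervalIntegral.integral_neg, hIoo] at this
    rw [← hI] at this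
    linarith
  constructor
  · exact hpart1
  -- Part 2
  · set A0 : ℝ := laplX u (setY z 0) + f (setY z 0) with hA0
    have hintIoo : IntegrableOn (fun t => t ^ a * A t) (Set.Ioo 0 y) volume := by
      have := (intervalIntegrable_iff_integrableOn_Ioc_of_le (le_of_lt hy)).mp hint
      exact this.mono_set Set.Ioo_subset_Ioc_self
    have hint2 : IntervalIntegrable (fun t : ℝ => t ^ a * A0) volume 0 y :=
      hbase.mul_const A0
    have hint2Ioo : IntegrableOn (fun t : ℝ => t ^ a * A0) (Set.Ioo 0 y) volume := by
      have := (intervalIntegrable_iff_integrableOn_Ioc_of_le (le_of_lt hy)).mp hint2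
      exact this.mono_set Set.Ioo_subset_Ioc_self
    have hconst : ∫ t in Set.Ioo (0:ℝ) y, t ^ a = y ^ (a+1) / (a+1) := by
      have h0 : ∫ t in (0:ℝ)..y, t ^ a = (y ^ (a+1) - 0 ^ (a+1)) / (a+1) :=
        integral_rpow (Or.inl ha)
      rw [hIoo] at h0
      rw [h0, Real.zero_rpow (by linarith : a + 1 ≠ 0)]
      ring_nf
    have hsplitI : ∫ t in Set.Ioo (0:ℝ) y, t ^ a * ((-A t) - (-A0)) =
        -I + A0 * (y ^ (a+1) / (a+1)) := by
      have hfun : ∀ t : ℝ, t ^ a * ((-A t) - (-A0)) =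
          -(t ^ a * A t) + (t ^ a * A0) := by intro t; ring
      rw [show (fun t : ℝ => t ^ a * ((-A t) - (-A0))) =
          fun t => -(t ^ a * A t) + (t ^ a * A0) from funext hfun]
      have hnegInt : IntegrableOn (fun t : ℝ => -(t ^ a * A t)) (Set.Ioo 0 y) volume :=
        hintIoo.neg
      rw [integral_add hnegInt hint2Ioo, integral_neg, integral_mul_const, hconst, ← hI]
      ring
    have h1a : (1:ℝ) + a ≠ 0 := by linarith
    have ha1 : a + (1:ℝ) ≠ 0 := by linarith
    have hPpos : (0:ℝ) < y ^ a := Real.rpow_pos_of_pos hy a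
    show pdy u z / y =
        y ^ (-(1 + a)) * (∫ t in Set.Ioo (0:ℝ) y, t ^ a * ((-A t) - (-A0))) + (-A0) / (1 + a)
    rw [hsplitI]
    rw [show -((1:ℝ)+a) = -(a+1) from by ring, Real.rpow_neg hy.le]
    have hpdyv : pdy u z = -I / y ^ a := by
      rw [eq_div_iff (ne_of_gt hPpos)]
      linarith [hpart1]
    have hparts : y ^ (a+1) = y ^ a * y := Real.rpow_add_one (ne_of_gt hy) a
    rw [hpdyv, hparts]
    field_simp
    ring
end

section
/- Gradient commutes with G up to order: let a ∈ (−1,∞) and let u ∈ H^{1,a}(B₁) be a smooth even-in-y solution of −div(|y|^a ∇u) = |y|^a f with f smooth and even in y. Then pointwise for y ≠ 0 the quotient Gu = y^{−1}∂_y u satisfies −div(|y|^{2+a} ∇(Gu)) = |y|^{2+a} · (y^{−1} ∂_y f), i.e. Gu solves the analogous equation with parameter a replaced by a+2 and right-hand side Gf. -/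
open MeasureTheory Metric Real

open Filter Topology InnerProductSpace

namespace S18
variable {n : ℕ}

noncomputable def e (n : ℕ) (i : Fin (n+1)) : Euc n := EuclideanSpace.single i 1
noncomputable def P (n : ℕ) : Euc n →L[ℝ] ℝ := EuclideanSpace.proj (Fin.last n)
noncomputable def D (i : Fin (n+1)) (g : Euc n → ℝ) (z : Euc n) : ℝ := fderiv ℝ g z (e n i)
noncomputable def lap (g : Euc n → ℝ) (z : Euc n) : ℝ := ∑ i, D i (D i g) z

lemma P_apply (w : Euc n) : P n w = w (Fin.last n) := rfl

lemma e_apply (i j : Fin (n+1)) : e n i j = if j = i then 1 else 0 :=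
  EuclideanSpace.single_apply i 1 j

lemma toDual_symm_coord (ℓ : StrongDual ℝ (Euc n)) (i : Fin (n+1)) :
    (InnerProductSpace.toDual ℝ (Euc n)).symm ℓ i = ℓ (e n i) := by
  have h1 := EuclideanSpace.inner_single_left (𝕜 := ℝ) i 1
    ((InnerProductSpace.toDual ℝ (Euc n)).symm ℓ)
  have h2 := InnerProductSpace.toDual_symm_apply (𝕜 := ℝ) (E := Euc n)
    (x := EuclideanSpace.single i 1) (y := ℓ)
  rw [real_inner_comm] at h1
  rw [h2] at h1
  simpa [e] using h1.symm

lemma grad_apply (h : Euc n → ℝ) (z : Euc n) (i : Fin (n+1)) :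
    gradient h z i = fderiv ℝ h z (e n i) := toDual_symm_coord _ i

lemma grad_decomp (h : Euc n → ℝ) (w : Euc n) :
    gradient h w = ∑ i, (D i h w) • e n i := by
  ext j
  rw [WithLp.ofLp_sum, Finset.sum_apply]
  simp only [PiLp.smul_apply, smul_eq_mul, e_apply]
  rw [grad_apply]
  simp [D]

lemma D_D_eq (g : Euc n → ℝ) (z : Euc n) (hg : DifferentiableAt ℝ (fderiv ℝ g) z)
    (i j : Fin (n+1)) :
    D i (D j g) z = fderiv ℝ (fderiv ℝ g) z (e n i) (e n j) := by
  have h : D j g = fun w => (fderiv ℝ g w) (e n j) := rfl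
  rw [D, h, fderiv_clm_apply hg (differentiableAt_const _)]
  simp

lemma Dsmooth (g : Euc n → ℝ) (hg : ContDiff ℝ (⊤ : ℕ∞) g) (i : Fin (n+1)) :
    ContDiff ℝ (⊤ : ℕ∞) (D i g) :=
  (hg.fderiv_right (by simp)).clm_apply contDiff_const

lemma Dcomm (g : Euc n → ℝ) (hg : ContDiff ℝ (⊤ : ℕ∞) g) (i j : Fin (n+1)) (z : Euc n) :
    D i (D j g) z = D j (D i g) z := by
  have hdz : DifferentiableAt ℝ (fderiv ℝ g) z :=
    (hg.fderiv_right (m := (⊤ : ℕ∞)) (by simp)).differentiable (by simp) z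
  rw [D_D_eq g z hdz i j, D_D_eq g z hdz j i]
  exact second_derivative_symmetric
    (fun y => ((hg.differentiable (by simp)) y).hasFDerivAt) hdz.hasFDerivAt (e n i) (e n j)

lemma hasDerivAt_abs_rpow (c : ℝ) {y : ℝ} (hy : y ≠ 0) :
    HasDerivAt (fun t : ℝ => |t| ^ c) (c * |y| ^ c / y) y := by
  rcases hy.lt_or_gt with hy' | hy'
  · have hy0 : (0:ℝ) < -y := by linarith
    have h1 : HasDerivAt (fun t : ℝ => (-t) ^ c) (c * (-y) ^ (c-1) * (-1)) y := by
      have := (Real.hasDerivAt_rpow_const (x := -y) (p := c) (Or.inl hy0.ne')).comp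
        y (hasDerivAt_neg y)
      simpa [Function.comp_def] using this
    have h2 : c * (-y) ^ (c-1) * (-1) = c * |y| ^ c / y := by
      rw [abs_of_neg hy', Real.rpow_sub_one hy0.ne']; field_simp
    have h3 : (fun t : ℝ => (-t) ^ c) =ᶠ[𝓝 y] (fun t : ℝ => |t| ^ c) := by
      filter_upwards [Iio_mem_nhds hy'] with t ht
      rw [abs_of_neg ht]
    exact h2 ▸ (h1.congr_of_eventuallyEq h3.symm)
  · have h1 : HasDerivAt (fun t : ℝ => t ^ c) (c * y ^ (c-1)) y := by
      simpa [mul_comm] using Real.hasDerivAt_rpow_const (x := y) (p := c) (Or.inl hy'.ne')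
    have h2 : c * y ^ (c-1) = c * |y| ^ c / y := by
      rw [abs_of_pos hy', Real.rpow_sub_one hy'.ne']; field_simp
    have h3 : (fun t : ℝ => t ^ c) =ᶠ[𝓝 y] (fun t : ℝ => |t| ^ c) := by
      filter_upwards [Ioi_mem_nhds hy'] with t ht
      rw [abs_of_pos ht]
    exact h2 ▸ (h1.congr_of_eventuallyEq h3.symm)

lemma vdiv_eq (c : ℝ) (h : Euc n → ℝ) (z : Euc n) (hz : z (Fin.last n) ≠ 0)
    (hh : ∀ i : Fin (n+1), DifferentiableAt ℝ h z ∧ DifferentiableAt ℝ (D i h) z) :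
    vdiv (fun w : Euc n => (|w (Fin.last n)| ^ c) • gradient h w) z =
      |z (Fin.last n)| ^ c * lap h z
        + c * |z (Fin.last n)| ^ c / z (Fin.last n) * D (Fin.last n) h z := by
  set y := z (Fin.last n) with hydef
  have hφ : HasFDerivAt (fun w : Euc n => |w (Fin.last n)| ^ c)
      ((c * |y| ^ c / y) • (P n)) z := by
    have := (hasDerivAt_abs_rpow c hz).comp_hasFDerivAt z (P n).hasFDerivAt; exact this
  -- the vector field as a finite sum of scalar • constant-vector
  have hVeq : (fun w : Euc n => (|w (Fin.last n)| ^ c) • gradient h w) =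
      fun w : Euc n => ∑ i, ((|w (Fin.last n)| ^ c) * D i h w) • e n i := by
    funext w
    rw [grad_decomp h w, Finset.smul_sum]
    congr 1
    funext i
    rw [smul_smul]
  -- derivative of each summand
  set ψ' : Fin (n+1) → (Euc n →L[ℝ] ℝ) := fun i =>
    (|y| ^ c) • (fderiv ℝ (D i h) z) + (D i h z) • ((c * |y| ^ c / y) • (P n)) with hψ'
  have hsummand : ∀ i : Fin (n+1),
      HasFDerivAt (fun w : Euc n => ((|w (Fin.last n)| ^ c) * D i h w) • e n i)
        ((ψ' i).smulRight (e n i)) z := by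
    intro i
    have hmul : HasFDerivAt (fun w : Euc n => (|w (Fin.last n)| ^ c) * D i h w)
        ((|y| ^ c) • (fderiv ℝ (D i h) z) + (D i h z) • ((c * |y| ^ c / y) • (P n))) z := by
      exact hφ.mul (hh i).2.hasFDerivAt
    have := hmul.fun_smul (hasFDerivAt_const (e n i) z)
    simpa only [smul_zero, zero_add] using this
  have hV : HasFDerivAt (fun w : Euc n => (|w (Fin.last n)| ^ c) • gradient h w)
      (∑ i, (ψ' i).smulRight (e n i)) z := by
    rw [hVeq]
    exact HasFDerivAt.fun_sum (fun i _ => hsummand i)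
  rw [vdiv]
  have key : ∀ j : Fin (n+1),
      fderiv ℝ (fun w : Euc n => (|w (Fin.last n)| ^ c) • gradient h w) z
        (EuclideanSpace.single j 1) j
      = |y| ^ c * D j (D j h) z + (D j h z) * ((c * |y| ^ c / y) * (e n j) (Fin.last n)) := by
    intro j
    rw [hV.fderiv]
    have he : (EuclideanSpace.single j 1 : Euc n) = e n j := rfl
    rw [he, ContinuousLinearMap.sum_apply, WithLp.ofLp_sum, Finset.sum_apply]
    have hterm : ∀ i : Fin (n+1),
        ((ψ' i).smulRight (e n i)) (e n j) i * (e n i) j -- dummy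
        = 0 ∨ True := fun _ => Or.inr trivial
    have : ∀ i : Fin (n+1), (((ψ' i).smulRight (e n i)) (e n j)) j =
        if j = i then ψ' i (e n j) else 0 := by
      intro i
      rw [ContinuousLinearMap.smulRight_apply]
      rw [PiLp.smul_apply, e_apply, smul_eq_mul]
      split <;> simp
    rw [Finset.sum_congr rfl (fun i _ => this i), Finset.sum_ite_eq Finset.univ j
      (fun i => ψ' i (e n j))]
    simp only [Finset.mem_univ, if_true, hψ', ContinuousLinearMap.add_apply,
      ContinuousLinearMap.smul_apply, smul_eq_mul, P_apply]
    rfl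
  rw [Finset.sum_congr rfl (fun j _ => key j), Finset.sum_add_distrib, ← Finset.mul_sum]
  congr 1
  have : ∀ j : Fin (n+1), (D j h z) * ((c * |y| ^ c / y) * (e n j) (Fin.last n)) =
      if (Fin.last n) = j then (c * |y| ^ c / y) * D j h z else 0 := by
    intro j
    rw [e_apply]
    split <;> simp <;> ring
  rw [Finset.sum_congr rfl (fun j _ => this j), Finset.sum_ite_eq Finset.univ (Fin.last n)
    (fun j => (c * |y| ^ c / y) * D j h z)]
  simp


lemma diffAt_div {g d : Euc n → ℝ} {z : Euc n} (hg : DifferentiableAt ℝ g z)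
    (hd : DifferentiableAt ℝ d z) (hx : d z ≠ 0) :
    DifferentiableAt ℝ (fun w => g w / d w) z := by
  have h : (fun w : Euc n => g w / d w) = fun w => g w * (d w)⁻¹ := by
    funext w; rw [div_eq_mul_inv]
  rw [h]
  exact hg.mul (hd.inv hx)

lemma fderiv_div_proj (g : Euc n → ℝ) (z : Euc n) (hg : DifferentiableAt ℝ g z)
    (hz : z (Fin.last n) ≠ 0) (w : Euc n) :
    fderiv ℝ (fun w' : Euc n => g w' / w' (Fin.last n)) z w =
      fderiv ℝ g z w / z (Fin.last n) - g z * w (Fin.last n) / z (Fin.last n) ^ 2 := by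
  have hinv : HasFDerivAt (fun w' : Euc n => (w' (Fin.last n))⁻¹)
      ((-(z (Fin.last n) ^ 2)⁻¹) • (P n)) z :=
    (hasDerivAt_inv hz).comp_hasFDerivAt z (P n).hasFDerivAt
  have h : HasFDerivAt (fun w' : Euc n => g w' * (w' (Fin.last n))⁻¹)
      (g z • ((-(z (Fin.last n) ^ 2)⁻¹) • (P n)) + (z (Fin.last n))⁻¹ • fderiv ℝ g z) z :=
    hg.hasFDerivAt.mul hinv
  have h2 : (fun w' : Euc n => g w' / w' (Fin.last n)) =
      fun w' : Euc n => g w' * (w' (Fin.last n))⁻¹ := by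
    funext w'; rw [div_eq_mul_inv]
  rw [h2, h.fderiv]
  simp only [ContinuousLinearMap.add_apply, ContinuousLinearMap.smul_apply, P_apply,
    smul_eq_mul]
  field_simp
  ring

lemma hP : Differentiable ℝ (fun w : Euc n => w (Fin.last n)) := (P n).differentiable

lemma hUopen : IsOpen {w : Euc n | w (Fin.last n) ≠ 0} :=
  IsOpen.preimage (P n).continuous isOpen_ne

lemma D_div_proj (g : Euc n → ℝ) (w : Euc n) (hg : DifferentiableAt ℝ g w)
    (hw : w (Fin.last n) ≠ 0) (j : Fin (n+1)) :
    D j (fun w' : Euc n => g w' / w' (Fin.last n)) w =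
      D j g w / w (Fin.last n) - g w * (e n j) (Fin.last n) / w (Fin.last n) ^ 2 := by
  rw [D]; exact fderiv_div_proj g w hg hw (e n j)

lemma fderiv_div_proj2 (g : Euc n → ℝ) (z : Euc n) (hg : DifferentiableAt ℝ g z)
    (hz : z (Fin.last n) ≠ 0) (w : Euc n) :
    fderiv ℝ (fun w' : Euc n => g w' / w' (Fin.last n) ^ 2) z w =
      fderiv ℝ g z w / z (Fin.last n) ^ 2
        - 2 * g z * w (Fin.last n) / z (Fin.last n) ^ 3 := by
  have h2 : (fun w' : Euc n => g w' / w' (Fin.last n) ^ 2) =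
      fun w' : Euc n => (g w' / w' (Fin.last n)) / w' (Fin.last n) := by
    funext w'
    rw [div_div, sq]
  rw [h2, fderiv_div_proj _ z (diffAt_div hg (hP z) hz) hz w, fderiv_div_proj g z hg hz w]
  field_simp
  ring

lemma lap_D_comm (g : Euc n → ℝ) (hg : ContDiff ℝ (⊤ : ℕ∞) g) (z : Euc n) :
    lap (D (Fin.last n) g) z = D (Fin.last n) (lap g) z := by
  have h1 : ∀ i : Fin (n+1), D i (D i (D (Fin.last n) g)) z = D (Fin.last n) (D i (D i g)) z := by
    intro i
    have e1 : D i (D (Fin.last n) g) = D (Fin.last n) (D i g) :=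
      funext (Dcomm g hg i (Fin.last n))
    calc D i (D i (D (Fin.last n) g)) z = D i (D (Fin.last n) (D i g)) z := by rw [e1]
      _ = D (Fin.last n) (D i (D i g)) z := Dcomm (D i g) (Dsmooth g hg i) i (Fin.last n) z
  rw [lap, Finset.sum_congr rfl (fun i _ => h1 i)]
  have hlap : lap g = fun w => ∑ i, D i (D i g) w := rfl
  have h2 : fderiv ℝ (lap g) z = ∑ i, fderiv ℝ (D i (D i g)) z := by
    rw [hlap]
    exact fderiv_fun_sum (fun i _ =>
      (Dsmooth (D i g) (Dsmooth g hg i) i).differentiable (by simp) z)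
  rw [D, h2, ContinuousLinearMap.sum_apply]
  rfl

lemma lap_diff (g : Euc n → ℝ) (hg : ContDiff ℝ (⊤ : ℕ∞) g) : Differentiable ℝ (lap g) := by
  have hlap : lap g = fun w => ∑ i, D i (D i g) w := rfl
  rw [hlap]
  exact Differentiable.fun_sum (fun i _ =>
    (Dsmooth (D i g) (Dsmooth g hg i) i).differentiable (by simp))

lemma e_last : (e n (Fin.last n)) (Fin.last n) = 1 := by
  rw [e_apply]; simp

section Main

variable {a : ℝ} {u f : Euc n → ℝ}

/-- The main computation, phrased with `D`. -/
lemma main' (a : ℝ) (u f : Euc n → ℝ) (hu : ContDiff ℝ (⊤ : ℕ∞) u) (hf : ContDiff ℝ (⊤ : ℕ∞) f)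
    (hsol' : ∀ w : Euc n, w (Fin.last n) ≠ 0 →
      lap u w + a * (D (Fin.last n) u w / w (Fin.last n)) + f w = 0) :
    ∀ z : Euc n, z (Fin.last n) ≠ 0 →
      vdiv (fun w : Euc n => (|w (Fin.last n)| ^ (2 + a)) •
          gradient (fun w' : Euc n => D (Fin.last n) u w' / w' (Fin.last n)) w) z =
        -(|z (Fin.last n)| ^ (2 + a) * (D (Fin.last n) f z / z (Fin.last n))) := by
  intro z hz
  set v : Euc n → ℝ := D (Fin.last n) u with hvdef
  set G : Euc n → ℝ := fun w' : Euc n => v w' / w' (Fin.last n) with hGdef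
  set y : ℝ := z (Fin.last n) with hydef
  have hv : ContDiff ℝ (⊤ : ℕ∞) v := Dsmooth u hu (Fin.last n)
  have hvd : Differentiable ℝ v := hv.differentiable (by simp)
  have hGd : ∀ w : Euc n, w (Fin.last n) ≠ 0 → DifferentiableAt ℝ G w := by
    intro w hw
    rw [hGdef]
    exact diffAt_div (hvd w) (hP w) hw
  have hU : {w : Euc n | w (Fin.last n) ≠ 0} ∈ 𝓝 z := hUopen.mem_nhds hz
  -- first derivatives of G
  have hDG : ∀ w : Euc n, w (Fin.last n) ≠ 0 → ∀ j : Fin (n+1), D j G w =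
      D j v w / w (Fin.last n) - v w * (e n j) (Fin.last n) / w (Fin.last n) ^ 2 :=
    fun w hw j => D_div_proj v w (hvd w) hw j
  have hev : ∀ j : Fin (n+1), (D j G) =ᶠ[𝓝 z]
      (fun w => D j v w / w (Fin.last n) - v w * (e n j) (Fin.last n) / w (Fin.last n) ^ 2) := by
    intro j
    filter_upwards [hU] with w hw
    exact hDG w hw j
  have hξd1 : ∀ j : Fin (n+1), DifferentiableAt ℝ
      (fun w : Euc n => D j v w / w (Fin.last n)) z :=
    fun j => diffAt_div ((Dsmooth v hv j).differentiable (by simp) z) (hP z) hz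
  have hξd2 : ∀ j : Fin (n+1), DifferentiableAt ℝ
      (fun w : Euc n => v w * (e n j) (Fin.last n) / w (Fin.last n) ^ 2) z :=
    fun j => diffAt_div ((hvd z).mul_const _) ((hP z).pow 2) (pow_ne_zero 2 hz)
  have hDGd : ∀ j : Fin (n+1), DifferentiableAt ℝ (D j G) z :=
    fun j => ((hev j).differentiableAt_iff).mpr ((hξd1 j).sub (hξd2 j))
  -- second derivatives of G
  have hD2G : ∀ j : Fin (n+1), D j (D j G) z =
      D j (D j v) z / y - 2 * (e n j) (Fin.last n) * D j v z / y ^ 2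
        + 2 * ((e n j) (Fin.last n)) ^ 2 * v z / y ^ 3 := by
    intro j
    have hre : D j (D j G) z = fderiv ℝ
        (fun w => D j v w / w (Fin.last n)
          - v w * (e n j) (Fin.last n) / w (Fin.last n) ^ 2) z (e n j) := by
      rw [D, (hev j).fderiv_eq]
    rw [hre, fderiv_fun_sub (hξd1 j) (hξd2 j), ContinuousLinearMap.sub_apply]
    have t1 : fderiv ℝ (fun w : Euc n => D j v w / w (Fin.last n)) z (e n j) =
        D j (D j v) z / y - D j v z * (e n j) (Fin.last n) / y ^ 2 :=
      fderiv_div_proj (D j v) z ((Dsmooth v hv j).differentiable (by simp) z) hz (e n j)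
    have hmul : fderiv ℝ (fun w : Euc n => v w * (e n j) (Fin.last n)) z (e n j) =
        D j v z * (e n j) (Fin.last n) := by
      rw [fderiv_mul_const (hvd z)]
      simp [D, mul_comm]
    have t2 : fderiv ℝ (fun w : Euc n =>
        v w * (e n j) (Fin.last n) / w (Fin.last n) ^ 2) z (e n j) =
        D j v z * (e n j) (Fin.last n) / y ^ 2
          - 2 * (v z * (e n j) (Fin.last n)) * (e n j) (Fin.last n) / y ^ 3 := by
      rw [fderiv_div_proj2 (fun w : Euc n => v w * (e n j) (Fin.last n)) z
        ((hvd z).mul_const _) hz (e n j), hmul]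
    rw [t1, t2]
    ring
  -- Laplacian of G
  have hlapG : lap G z = lap v z / y - 2 * D (Fin.last n) v z / y ^ 2 + 2 * v z / y ^ 3 := by
    rw [lap, Finset.sum_congr rfl (fun j _ => hD2G j)]
    rw [Finset.sum_add_distrib, Finset.sum_sub_distrib]
    have hs1 : ∑ j : Fin (n+1), D j (D j v) z / y = lap v z / y := by
      rw [lap, Finset.sum_div]
    have hs2 : ∑ j : Fin (n+1), 2 * (e n j) (Fin.last n) * D j v z / y ^ 2 =
        2 * D (Fin.last n) v z / y ^ 2 := by
      have : ∀ j : Fin (n+1), 2 * (e n j) (Fin.last n) * D j v z / y ^ 2 =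
          if Fin.last n = j then 2 * D j v z / y ^ 2 else 0 := by
        intro j
        rw [e_apply]
        split <;> simp <;> ring
      rw [Finset.sum_congr rfl (fun j _ => this j),
        Finset.sum_ite_eq Finset.univ (Fin.last n) (fun j => 2 * D j v z / y ^ 2)]
      simp
    have hs3 : ∑ j : Fin (n+1), 2 * ((e n j) (Fin.last n)) ^ 2 * v z / y ^ 3 =
        2 * v z / y ^ 3 := by
      have : ∀ j : Fin (n+1), 2 * ((e n j) (Fin.last n)) ^ 2 * v z / y ^ 3 =
          if Fin.last n = j then 2 * v z / y ^ 3 else 0 := by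
        intro j
        rw [e_apply]
        split <;> simp <;> ring
      rw [Finset.sum_congr rfl (fun j _ => this j),
        Finset.sum_ite_eq Finset.univ (Fin.last n) (fun _ => 2 * v z / y ^ 3)]
      simp
    rw [hs1, hs2, hs3]
  -- differentiate the equation
  have hEev : (fun w : Euc n => lap u w + a * (v w / w (Fin.last n)) + f w) =ᶠ[𝓝 z]
      (fun _ => (0:ℝ)) := by
    filter_upwards [hU] with w hw
    exact hsol' w hw
  have hD0 : D (Fin.last n) (fun w : Euc n =>
      lap u w + a * (v w / w (Fin.last n)) + f w) z = 0 := by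
    rw [D, hEev.fderiv_eq]
    simp
  have hGz : DifferentiableAt ℝ G z := hGd z hz
  have hsplit : D (Fin.last n) (fun w : Euc n =>
      lap u w + a * (v w / w (Fin.last n)) + f w) z =
      D (Fin.last n) (lap u) z + a * D (Fin.last n) G z + D (Fin.last n) f z := by
    have hd1 : DifferentiableAt ℝ (fun w : Euc n => lap u w + a * G w) z :=
      ((lap_diff u hu) z).add (hGz.const_mul a)
    rw [D, show (fun w : Euc n => lap u w + a * (v w / w (Fin.last n)) + f w) =
      (fun w : Euc n => (lap u w + a * G w) + f w) from rfl]
    rw [fderiv_fun_add hd1 (hf.differentiable (by simp) z), ContinuousLinearMap.add_apply]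
    rw [fderiv_fun_add ((lap_diff u hu) z) (hGz.const_mul a), ContinuousLinearMap.add_apply]
    rw [fderiv_const_mul hGz a]
    rfl
  -- equation for the derivatives at z
  have hlapv : lap v z = D (Fin.last n) (lap u) z := lap_D_comm u hu z
  have hDL : D (Fin.last n) G z = D (Fin.last n) v z / y - v z / y ^ 2 := by
    rw [hDG z hz (Fin.last n), e_last]
    ring
  have hR : lap v z + a * (D (Fin.last n) v z / y - v z / y ^ 2)
      + D (Fin.last n) f z = 0 := by
    rw [hlapv, ← hDL]
    rw [hsplit] at hD0
    linarith
  -- apply the divergence formula with exponent 2 + a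
  rw [vdiv_eq (2 + a) G z hz (fun j => ⟨hGz, hDGd j⟩)]
  rw [hlapG, hDL]
  set A : ℝ := |y| ^ (2 + a) with hA
  set lv : ℝ := lap v z
  set vy : ℝ := D (Fin.last n) v z
  set vv : ℝ := v z
  set fy : ℝ := D (Fin.last n) f z
  have hlv : lv = -(a * (vy / y - vv / y ^ 2)) - fy := by linarith
  rw [hlv]
  rw [← hydef]
  field_simp
  ring

end Main
end S18

theorem stmt18 (n : ℕ) (a : ℝ) (ha : -1 < a)
    (u f : Euc n → ℝ) (hu : ContDiff ℝ (⊤ : ℕ∞) u) (hf : ContDiff ℝ (⊤ : ℕ∞) f)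
    (hueven : ∀ z : Euc n, u (reflY z) = u z)
    (hfeven : ∀ z : Euc n, f (reflY z) = f z)
    (hsol : ∀ z : Euc n, z (Fin.last n) ≠ 0 →
      vdiv (fun z : Euc n => (|z (Fin.last n)| ^ a) • gradient u z) z =
        -(|z (Fin.last n)| ^ a * f z)) :
    ∀ z : Euc n, z (Fin.last n) ≠ 0 →
      vdiv (fun z : Euc n => (|z (Fin.last n)| ^ (2 + a)) •
          gradient (fun w : Euc n => pdy u w / w (Fin.last n)) z) z =
        -(|z (Fin.last n)| ^ (2 + a) * (pdy f z / z (Fin.last n))) := by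
  have hsol' : ∀ w : Euc n, w (Fin.last n) ≠ 0 →
      S18.lap u w + a * (S18.D (Fin.last n) u w / w (Fin.last n)) + f w = 0 := by
    intro w hw
    have h1 := hsol w hw
    rw [S18.vdiv_eq a u w hw (fun j => ⟨hu.differentiable (by simp) w,
      (S18.Dsmooth u hu j).differentiable (by simp) w⟩)] at h1
    have hpos : (0:ℝ) < |w (Fin.last n)| ^ a := Real.rpow_pos_of_pos (abs_pos.mpr hw) a
    have h2 : |w (Fin.last n)| ^ a *
        (S18.lap u w + a * (S18.D (Fin.last n) u w / w (Fin.last n)) + f w) = 0 := by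
      rw [show |w (Fin.last n)| ^ a *
          (S18.lap u w + a * (S18.D (Fin.last n) u w / w (Fin.last n)) + f w) =
          (|w (Fin.last n)| ^ a * S18.lap u w
            + a * |w (Fin.last n)| ^ a / w (Fin.last n) * S18.D (Fin.last n) u w)
            + |w (Fin.last n)| ^ a * f w from by ring, h1]
      ring
    exact (mul_eq_zero.mp h2).resolve_left hpos.ne'
  exact S18.main' a u f hu hf hsol'
end
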